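/- arXiv:1706.08657 — 6 statements merged into one kernel-verified Lean document; each statement's English description precedes it below -/
import Mathlib

section
/- For every p ∈ (0,∞) and every family {a_Q} of non-negative reals indexed by dyadic cubes with only finitely many nonzero entries, pointwise one has (∑_Q a_Q 1_Q)^p ≍_p ∑_Q a_Q (∑_{R ⊆ Q} a_R 1_R)^{p-1}, i.e., there exist constants c(p), C(p) > 0 such that c(p) ∑_Q a_Q 1_Q(x) (∑_{R ⊆ Q} a_R 1_R(x))^{p-1} ≤ (∑_Q a_Q 1_Q(x))^p ≤ C(p) ∑_Q a_Q 1_Q(x) (∑_{R ⊆ Q} a_R 1_R(x))^{p-1} for all x. -/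
open MeasureTheory ENNReal Filter

/-- A dyadic cube `2^k([0,1)^d + j)` in `ℝ^d`. -/
structure DyadicCube (d : ℕ) where
  k : ℤ
  j : Fin d → ℤ

/-- The underlying set of a dyadic cube. -/
def DyadicCube.toSet {d : ℕ} (Q : DyadicCube d) : Set (Fin d → ℝ) :=
  {x | ∀ i, (2:ℝ) ^ Q.k * (Q.j i) ≤ x i ∧ x i < (2:ℝ) ^ Q.k * (Q.j i + 1)}

lemma cube_eq_of_k_eq {d : ℕ} {Q R : DyadicCube d} {x : Fin d → ℝ}
    (hQ : x ∈ Q.toSet) (hR : x ∈ R.toSet) (hk : Q.k = R.k) : Q = R := by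
  obtain ⟨k, j⟩ := Q
  obtain ⟨k', j'⟩ := R
  simp only [DyadicCube.mk.injEq]
  dsimp at hk
  subst hk
  refine ⟨rfl, funext fun i => ?_⟩
  have h1 := hQ i
  have h2 := hR i
  dsimp [DyadicCube.toSet] at h1 h2
  have hpos : (0:ℝ) < (2:ℝ) ^ k := by positivity
  have ha : (j i : ℝ) < j' i + 1 := by
    have := h1.1.trans_lt h2.2
    exact (mul_lt_mul_iff_right₀ hpos).mp this
  have hb : (j' i : ℝ) < j i + 1 := by
    have := h2.1.trans_lt h1.2
    exact (mul_lt_mul_iff_right₀ hpos).mp this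
  have ha' : j i < j' i + 1 := by exact_mod_cast ha
  have hb' : j' i < j i + 1 := by exact_mod_cast hb
  omega

lemma cube_subset_of_k_le {d : ℕ} {Q R : DyadicCube d} {x : Fin d → ℝ}
    (hQ : x ∈ Q.toSet) (hR : x ∈ R.toSet) (hk : Q.k ≤ R.k) : Q.toSet ⊆ R.toSet := by
  intro y hy i
  have h1 := hQ i
  have h2 := hR i
  have h3 := hy i
  have hpos : (0:ℝ) < (2:ℝ) ^ Q.k := by positivity
  set e : ℕ := (R.k - Q.k).toNat with he
  have hRk : (2:ℝ) ^ R.k = (2:ℝ) ^ Q.k * ((2:ℤ) ^ e : ℤ) := by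
    push_cast
    rw [← zpow_natCast (2:ℝ) e, ← zpow_add₀ (two_ne_zero)]
    congr 1
    omega
  -- (A) 2^e * R.j i ≤ Q.j i
  have hA : ((2:ℤ) ^ e * R.j i : ℤ) ≤ Q.j i := by
    have : (2:ℝ) ^ Q.k * (((2:ℤ) ^ e * R.j i : ℤ) : ℝ) < (2:ℝ) ^ Q.k * ((Q.j i : ℝ) + 1) := by
      push_cast
      calc (2:ℝ) ^ Q.k * ((2:ℤ) ^ e * R.j i) = (2:ℝ) ^ R.k * R.j i := by
            rw [hRk]; push_cast; ring
        _ ≤ x i := h2.1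
        _ < (2:ℝ) ^ Q.k * (Q.j i + 1) := h1.2
    have h' := (mul_lt_mul_iff_right₀ hpos).mp this
    have : (((2:ℤ) ^ e * R.j i : ℤ) : ℝ) < ((Q.j i + 1 : ℤ) : ℝ) := by push_cast; push_cast at h'; linarith
    have : (2:ℤ) ^ e * R.j i < Q.j i + 1 := by exact_mod_cast this
    omega
  -- (B) Q.j i + 1 ≤ 2^e * (R.j i + 1)
  have hB : Q.j i + 1 ≤ (2:ℤ) ^ e * (R.j i + 1) := by
    have : (2:ℝ) ^ Q.k * ((Q.j i : ℤ) : ℝ) < (2:ℝ) ^ Q.k * (((2:ℤ) ^ e * (R.j i + 1) : ℤ) : ℝ) := by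
      calc (2:ℝ) ^ Q.k * ((Q.j i : ℤ) : ℝ) ≤ x i := by exact_mod_cast h1.1
        _ < (2:ℝ) ^ R.k * (R.j i + 1) := h2.2
        _ = (2:ℝ) ^ Q.k * (((2:ℤ) ^ e * (R.j i + 1) : ℤ) : ℝ) := by rw [hRk]; push_cast; ring
    have h' := (mul_lt_mul_iff_right₀ hpos).mp this
    have : Q.j i < (2:ℤ) ^ e * (R.j i + 1) := by exact_mod_cast h'
    omega
  constructor
  · calc (2:ℝ) ^ R.k * (R.j i) = (2:ℝ) ^ Q.k * (((2:ℤ) ^ e * R.j i : ℤ) : ℝ) := by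
          rw [hRk]; push_cast; ring
      _ ≤ (2:ℝ) ^ Q.k * (Q.j i) := by
          apply mul_le_mul_of_nonneg_left _ hpos.le
          exact_mod_cast hA
      _ ≤ y i := h3.1
  · calc y i < (2:ℝ) ^ Q.k * (Q.j i + 1) := h3.2
      _ ≤ (2:ℝ) ^ Q.k * (((2:ℤ) ^ e * (R.j i + 1) : ℤ) : ℝ) := by
          apply mul_le_mul_of_nonneg_left _ hpos.le
          exact_mod_cast hB
      _ = (2:ℝ) ^ R.k * (R.j i + 1) := by rw [hRk]; push_cast; ring

lemma bern_ge {p : ℝ} (hp : 1 ≤ p) {u v : ℝ} (hu : 0 ≤ u) (huv : u ≤ v) :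
    v ^ p - u ^ p ≤ p * v ^ (p - 1) * (v - u) := by
  rcases eq_or_lt_of_le (hu.trans huv) with hv | hv
  · have hu0 : u = 0 := le_antisymm (huv.trans hv.symm.le) hu
    subst hu0
    rw [← hv, Real.zero_rpow (by linarith : p ≠ 0)]
    simp
  have hs : -1 ≤ u / v - 1 := by
    have : 0 ≤ u / v := div_nonneg hu hv.le
    linarith
  have hB := one_add_mul_self_le_rpow_one_add hs hp
  rw [add_sub_cancel] at hB
  have hdiv : (u / v) ^ p = u ^ p / v ^ p := Real.div_rpow hu hv.le p
  have hvp : (0:ℝ) < v ^ p := Real.rpow_pos_of_pos hv p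
  have hv1 : v ^ (p - 1) = v ^ p / v := by
    rw [Real.rpow_sub hv, Real.rpow_one]
  rw [hdiv] at hB
  rw [hv1]
  have := mul_le_mul_of_nonneg_right hB hvp.le
  rw [div_mul_cancel₀ _ hvp.ne'] at this
  have hveq : v ^ p / v * (v - u) = v ^ p * (1 - u / v) := by
    field_simp
  nlinarith [this]

lemma bern_le {p : ℝ} (hp1 : 0 < p) (hp2 : p ≤ 1) {u v : ℝ} (hu : 0 ≤ u) (huv : u ≤ v) :
    p * v ^ (p - 1) * (v - u) ≤ v ^ p - u ^ p := by
  rcases eq_or_lt_of_le (hu.trans huv) with hv | hv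
  · have hu0 : u = 0 := le_antisymm (huv.trans hv.symm.le) hu
    subst hu0
    rw [← hv, Real.zero_rpow hp1.ne']
    simp
  have hs : -1 ≤ u / v - 1 := by
    have : 0 ≤ u / v := div_nonneg hu hv.le
    linarith
  have hB := rpow_one_add_le_one_add_mul_self hs hp1.le hp2
  rw [add_sub_cancel] at hB
  have hdiv : (u / v) ^ p = u ^ p / v ^ p := Real.div_rpow hu hv.le p
  have hvp : (0:ℝ) < v ^ p := Real.rpow_pos_of_pos hv p
  have hv1 : v ^ (p - 1) = v ^ p / v := by
    rw [Real.rpow_sub hv, Real.rpow_one]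
  rw [hdiv] at hB
  rw [hv1]
  have := mul_le_mul_of_nonneg_right hB hvp.le
  rw [div_mul_cancel₀ _ hvp.ne'] at this
  have hveq : v ^ p / v * (v - u) = v ^ p * (1 - u / v) := by
    field_simp
  nlinarith [this]

lemma tele_ge {p : ℝ} (hp : 1 ≤ p) {ι : Type*} (K : ι → ℤ) (b : ι → ℝ) (hb : ∀ i, 0 ≤ b i)
    (G : Finset ι) (hinj : Set.InjOn K G) :
    (∑ i ∈ G, b i) ^ p ≤
      p * ∑ i ∈ G, b i * (∑ j ∈ G.filter (fun j => K j ≤ K i), b j) ^ (p - 1) := by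
  classical
  induction G using Finset.strongInduction with
  | _ G ih =>
    rcases G.eq_empty_or_nonempty with rfl | hne
    · simp [Real.zero_rpow (by linarith : p ≠ (0:ℝ))]
    obtain ⟨m, hm, hmax⟩ := G.exists_max_image K hne
    set G' := G.erase m with hG'
    have hss : G' ⊂ G := Finset.erase_ssubset hm
    have hinj' : Set.InjOn K G' := hinj.mono (by
      simpa using (Finset.coe_subset.mpr hss.subset))
    have IH := ih G' hss hinj'
    have hfeq : ∀ i ∈ G', G.filter (fun j => K j ≤ K i) = G'.filter (fun j => K j ≤ K i) := by
      intro i hi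
      ext j
      simp only [Finset.mem_filter, hG', Finset.mem_erase]
      constructor
      · rintro ⟨hjG, hji⟩
        refine ⟨⟨?_, hjG⟩, hji⟩
        rintro rfl
        have him : K i = K j := le_antisymm (hmax i (Finset.mem_of_mem_erase hi)) hji
        exact (Finset.ne_of_mem_erase hi) (hinj (Finset.mem_of_mem_erase hi) hjG him)
      · rintro ⟨⟨_, hjG⟩, hji⟩
        exact ⟨hjG, hji⟩
    have hfm : G.filter (fun j => K j ≤ K m) = G :=
      Finset.filter_true_of_mem (fun j hj => hmax j hj)
    set T' : ℝ := ∑ i ∈ G', b i with hT'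
    have hsplit : ∑ i ∈ G, b i = T' + b m := (Finset.sum_erase_add G b hm).symm
    have hsplit2 : ∑ i ∈ G, b i * (∑ j ∈ G.filter (fun j => K j ≤ K i), b j) ^ (p - 1)
        = (∑ i ∈ G', b i * (∑ j ∈ G'.filter (fun j => K j ≤ K i), b j) ^ (p - 1))
          + b m * (T' + b m) ^ (p - 1) := by
      rw [← Finset.sum_erase_add G _ hm, hfm, ← hsplit]
      congr 1
      exact Finset.sum_congr rfl (fun i hi => by rw [hfeq i hi])
    have hT'0 : 0 ≤ T' := Finset.sum_nonneg (fun i _ => hb i)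
    have hbm : 0 ≤ b m := hb m
    have hbern := bern_ge hp hT'0 (by linarith : T' ≤ T' + b m)
    rw [hsplit, hsplit2]
    nlinarith [IH]

lemma tele_le {p : ℝ} (hp1 : 0 < p) (hp2 : p ≤ 1) {ι : Type*} (K : ι → ℤ) (b : ι → ℝ)
    (hb : ∀ i, 0 ≤ b i) (G : Finset ι) (hinj : Set.InjOn K G) :
    p * ∑ i ∈ G, b i * (∑ j ∈ G.filter (fun j => K j ≤ K i), b j) ^ (p - 1) ≤
      (∑ i ∈ G, b i) ^ p := by
  classical
  induction G using Finset.strongInduction with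
  | _ G ih =>
    rcases G.eq_empty_or_nonempty with rfl | hne
    · simp [Real.zero_rpow hp1.ne']
    obtain ⟨m, hm, hmax⟩ := G.exists_max_image K hne
    set G' := G.erase m with hG'
    have hss : G' ⊂ G := Finset.erase_ssubset hm
    have hinj' : Set.InjOn K G' := hinj.mono (by
      simpa using (Finset.coe_subset.mpr hss.subset))
    have IH := ih G' hss hinj'
    have hfeq : ∀ i ∈ G', G.filter (fun j => K j ≤ K i) = G'.filter (fun j => K j ≤ K i) := by
      intro i hi
      ext j
      simp only [Finset.mem_filter, hG', Finset.mem_erase]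
      constructor
      · rintro ⟨hjG, hji⟩
        refine ⟨⟨?_, hjG⟩, hji⟩
        rintro rfl
        have him : K i = K j := le_antisymm (hmax i (Finset.mem_of_mem_erase hi)) hji
        exact (Finset.ne_of_mem_erase hi) (hinj (Finset.mem_of_mem_erase hi) hjG him)
      · rintro ⟨⟨_, hjG⟩, hji⟩
        exact ⟨hjG, hji⟩
    have hfm : G.filter (fun j => K j ≤ K m) = G :=
      Finset.filter_true_of_mem (fun j hj => hmax j hj)
    set T' : ℝ := ∑ i ∈ G', b i with hT'
    have hsplit : ∑ i ∈ G, b i = T' + b m := (Finset.sum_erase_add G b hm).symm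
    have hsplit2 : ∑ i ∈ G, b i * (∑ j ∈ G.filter (fun j => K j ≤ K i), b j) ^ (p - 1)
        = (∑ i ∈ G', b i * (∑ j ∈ G'.filter (fun j => K j ≤ K i), b j) ^ (p - 1))
          + b m * (T' + b m) ^ (p - 1) := by
      rw [← Finset.sum_erase_add G _ hm, hfm, ← hsplit]
      congr 1
      exact Finset.sum_congr rfl (fun i hi => by rw [hfeq i hi])
    have hT'0 : 0 ≤ T' := Finset.sum_nonneg (fun i _ => hb i)
    have hbm : 0 ≤ b m := hb m
    have hbern := bern_le hp1 hp2 hT'0 (by linarith : T' ≤ T' + b m)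
    rw [hsplit, hsplit2]
    nlinarith [IH]
lemma core {p : ℝ} (hp : 0 < p) {ι : Type*} (K : ι → ℤ) (b : ι → ℝ) (hb : ∀ i, 0 ≤ b i)
    (G : Finset ι) (hinj : Set.InjOn K G) (s : ι → ℝ)
    (hs1 : ∀ i ∈ G, ∑ j ∈ G.filter (fun j => K j ≤ K i), b j ≤ s i)
    (hs2 : ∀ i ∈ G, s i ≤ ∑ j ∈ G, b j) :
    min 1 p * ∑ i ∈ G, b i * s i ^ (p - 1) ≤ (∑ i ∈ G, b i) ^ p ∧
      (∑ i ∈ G, b i) ^ p ≤ max 1 p * ∑ i ∈ G, b i * s i ^ (p - 1) := by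
  classical
  set T : ℝ := ∑ i ∈ G, b i with hT
  have hT0 : 0 ≤ T := Finset.sum_nonneg (fun i _ => hb i)
  have ht0 : ∀ i ∈ G, 0 ≤ ∑ j ∈ G.filter (fun j => K j ≤ K i), b j :=
    fun i _ => Finset.sum_nonneg (fun j _ => hb j)
  have htb : ∀ i ∈ G, b i ≤ ∑ j ∈ G.filter (fun j => K j ≤ K i), b j := by
    intro i hi
    exact Finset.single_le_sum (fun j _ => hb j)
      (Finset.mem_filter.mpr ⟨hi, le_refl _⟩)
  have hTpow : T * T ^ (p - 1) = T ^ p := by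
    rcases eq_or_lt_of_le hT0 with h0 | h0
    · rw [← h0, Real.zero_rpow (by linarith [hp] : p ≠ (0:ℝ)), zero_mul]
    · rw [mul_comm, ← Real.rpow_add_one h0.ne', sub_add_cancel]
  have hsumT : ∑ i ∈ G, b i * T ^ (p - 1) = T ^ p := by
    rw [← Finset.sum_mul, ← hT, hTpow]
  rcases le_total 1 p with hp1 | hp1
  · -- p ≥ 1
    rw [min_eq_left hp1, max_eq_right hp1, one_mul]
    constructor
    · calc ∑ i ∈ G, b i * s i ^ (p - 1)
          ≤ ∑ i ∈ G, b i * T ^ (p - 1) := by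
            apply Finset.sum_le_sum
            intro i hi
            apply mul_le_mul_of_nonneg_left _ (hb i)
            exact Real.rpow_le_rpow ((ht0 i hi).trans (hs1 i hi)) (hs2 i hi) (by linarith)
        _ = T ^ p := hsumT
    · calc T ^ p ≤ p * ∑ i ∈ G, b i * (∑ j ∈ G.filter (fun j => K j ≤ K i), b j) ^ (p - 1) :=
            tele_ge hp1 K b hb G hinj
        _ ≤ p * ∑ i ∈ G, b i * s i ^ (p - 1) := by
            apply mul_le_mul_of_nonneg_left _ hp.le
            apply Finset.sum_le_sum
            intro i hi
            apply mul_le_mul_of_nonneg_left _ (hb i)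
            exact Real.rpow_le_rpow (ht0 i hi) (hs1 i hi) (by linarith)
  · -- p ≤ 1
    rw [min_eq_right hp1, max_eq_left hp1, one_mul]
    constructor
    · calc p * ∑ i ∈ G, b i * s i ^ (p - 1)
          ≤ p * ∑ i ∈ G, b i * (∑ j ∈ G.filter (fun j => K j ≤ K i), b j) ^ (p - 1) := by
            apply mul_le_mul_of_nonneg_left _ hp.le
            apply Finset.sum_le_sum
            intro i hi
            rcases eq_or_lt_of_le (hb i) with h0 | h0
            · rw [← h0, zero_mul, zero_mul]
            apply mul_le_mul_of_nonneg_left _ (hb i)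
            exact Real.rpow_le_rpow_of_nonpos (lt_of_lt_of_le h0 (htb i hi)) (hs1 i hi)
              (by linarith)
        _ ≤ T ^ p := tele_le hp hp1 K b hb G hinj
    · calc T ^ p = ∑ i ∈ G, b i * T ^ (p - 1) := hsumT.symm
        _ ≤ ∑ i ∈ G, b i * s i ^ (p - 1) := by
            apply Finset.sum_le_sum
            intro i hi
            rcases eq_or_lt_of_le (hb i) with h0 | h0
            · rw [← h0, zero_mul, zero_mul]
            apply mul_le_mul_of_nonneg_left _ (hb i)
            exact Real.rpow_le_rpow_of_nonpos
              (lt_of_lt_of_le h0 ((htb i hi).trans (hs1 i hi))) (hs2 i hi) (by linarith)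

/-- pointwise summation-by-parts comparison
`(∑_Q a_Q 1_Q)^p ≍_p ∑_Q a_Q 1_Q · (∑_{R ⊆ Q} a_R 1_R)^(p-1)`. -/
theorem stmt0 (p : ℝ) (hp : 0 < p) :
    ∃ c C : ℝ, 0 < c ∧ 0 < C ∧
      ∀ (d : ℕ) (a : DyadicCube d → ℝ),
        (∀ Q, 0 ≤ a Q) → (Function.support a).Finite →
        ∀ x : Fin d → ℝ,
          c * ∑ᶠ Q : DyadicCube d,
              Q.toSet.indicator (fun _ => a Q) x *
                (∑ᶠ (R : DyadicCube d) (_ : R.toSet ⊆ Q.toSet),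
                    R.toSet.indicator (fun _ => a R) x) ^ (p - 1)
            ≤ (∑ᶠ Q : DyadicCube d, Q.toSet.indicator (fun _ => a Q) x) ^ p ∧
          (∑ᶠ Q : DyadicCube d, Q.toSet.indicator (fun _ => a Q) x) ^ p ≤
            C * ∑ᶠ Q : DyadicCube d,
              Q.toSet.indicator (fun _ => a Q) x *
                (∑ᶠ (R : DyadicCube d) (_ : R.toSet ⊆ Q.toSet),
                    R.toSet.indicator (fun _ => a R) x) ^ (p - 1) := by
  classical
  refine ⟨min 1 p, max 1 p, by positivity, by positivity, ?_⟩
  intro d a ha hfin x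
  have hSfin : {Q : DyadicCube d | a Q ≠ 0 ∧ x ∈ Q.toSet}.Finite :=
    hfin.subset (fun Q hQ => hQ.1)
  set F : Finset (DyadicCube d) := hSfin.toFinset with hF
  have hmemF : ∀ Q, Q ∈ F ↔ a Q ≠ 0 ∧ x ∈ Q.toSet := by
    intro Q; simp [hF, Set.Finite.mem_toFinset]
  -- support facts
  have hind : ∀ Q : DyadicCube d,
      Q.toSet.indicator (fun _ => a Q) x ≠ 0 → Q ∈ F := by
    intro Q h
    rw [hmemF]
    by_cases hx : x ∈ Q.toSet
    · rw [Set.indicator_of_mem hx] at h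
      exact ⟨h, hx⟩
    · rw [Set.indicator_of_notMem hx] at h
      exact absurd rfl h
  have hindval : ∀ Q ∈ F, Q.toSet.indicator (fun _ => a Q) x = a Q := by
    intro Q hQ
    exact Set.indicator_of_mem ((hmemF Q).mp hQ).2 (fun _ => a Q)
  -- (r1)
  have r1 : (∑ᶠ Q : DyadicCube d, Q.toSet.indicator (fun _ => a Q) x) = ∑ Q ∈ F, a Q := by
    rw [finsum_eq_sum_of_support_subset _ (fun Q hQ => hind Q hQ)]
    exact Finset.sum_congr rfl hindval
  -- (r2) inner sums
  have r2 : ∀ Q : DyadicCube d,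
      (∑ᶠ (R : DyadicCube d) (_ : R.toSet ⊆ Q.toSet), R.toSet.indicator (fun _ => a R) x)
        = ∑ R ∈ F.filter (fun R => R.toSet ⊆ Q.toSet), a R := by
    intro Q
    have heq : ∀ R : DyadicCube d,
        (∑ᶠ (_ : R.toSet ⊆ Q.toSet), R.toSet.indicator (fun _ => a R) x)
          = if R.toSet ⊆ Q.toSet then R.toSet.indicator (fun _ => a R) x else 0 :=
      fun R => finsum_eq_if
    calc (∑ᶠ (R : DyadicCube d) (_ : R.toSet ⊆ Q.toSet), R.toSet.indicator (fun _ => a R) x)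
        = ∑ᶠ R : DyadicCube d,
            if R.toSet ⊆ Q.toSet then R.toSet.indicator (fun _ => a R) x else 0 := by
          exact finsum_congr heq
      _ = ∑ R ∈ F, if R.toSet ⊆ Q.toSet then R.toSet.indicator (fun _ => a R) x else 0 := by
          apply finsum_eq_sum_of_support_subset
          intro R hR
          simp only [Function.mem_support] at hR
          apply hind R
          intro h0
          apply hR
          rw [h0]
          simp
      _ = ∑ R ∈ F.filter (fun R => R.toSet ⊆ Q.toSet), R.toSet.indicator (fun _ => a R) x :=
          (Finset.sum_filter _ _).symm
      _ = ∑ R ∈ F.filter (fun R => R.toSet ⊆ Q.toSet), a R :=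
          Finset.sum_congr rfl (fun R hR => hindval R (Finset.mem_of_mem_filter R hR))
  -- (r3) outer sum
  have r3 : (∑ᶠ Q : DyadicCube d,
      Q.toSet.indicator (fun _ => a Q) x *
        (∑ᶠ (R : DyadicCube d) (_ : R.toSet ⊆ Q.toSet),
            R.toSet.indicator (fun _ => a R) x) ^ (p - 1))
      = ∑ Q ∈ F, a Q * (∑ R ∈ F.filter (fun R => R.toSet ⊆ Q.toSet), a R) ^ (p - 1) := by
    rw [finsum_eq_sum_of_support_subset _ (s := F) ?hsupp]
    case hsupp =>
      intro Q hQ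
      simp only [Function.mem_support] at hQ
      apply hind Q
      intro h0
      apply hQ
      rw [h0, zero_mul]
    exact Finset.sum_congr rfl (fun Q hQ => by rw [hindval Q hQ, r2 Q])
  rw [r1, r3]
  -- apply core
  apply core hp (fun Q => Q.k) a ha F
  · intro Q hQ R hR hk
    exact cube_eq_of_k_eq ((hmemF Q).mp hQ).2 ((hmemF R).mp hR).2 hk
  · intro Q hQ
    apply Finset.sum_le_sum_of_subset_of_nonneg
    · intro R hR
      rw [Finset.mem_filter] at hR ⊢
      exact ⟨hR.1, cube_subset_of_k_le ((hmemF R).mp hR.1).2 ((hmemF Q).mp hQ).2 hR.2⟩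
    · intro R _ _
      exact ha R
  · intro Q _
    apply Finset.sum_le_sum_of_subset_of_nonneg (Finset.filter_subset _ _)
    intro R _ _
    exact ha R
end

section
/- Let p ∈ (1,∞), let μ be a locally finite Borel measure on ℝ^d, and let {a_Q} be a finitely supported family of non-negative reals indexed by dyadic cubes. Then ∫ (∑_Q a_Q 1_Q)^p dμ ≍_p ∑_Q a_Q μ(Q) ( (1/μ(Q)) ∑_{R ⊆ Q} a_R μ(R) )^{p-1}, where terms with μ(Q) = 0 are interpreted as 0. -/
open MeasureTheory ENNReal Filter
open scoped NNReal ENNReal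


namespace DyadicHelper

lemma interval_subset {k k' : ℤ} (hk : k ≤ k') {j j' : ℤ} {x : ℝ}
    (h1 : (2:ℝ)^k * j ≤ x) (h2 : x < (2:ℝ)^k * (j+1))
    (h3 : (2:ℝ)^k' * j' ≤ x) (h4 : x < (2:ℝ)^k' * (j'+1))
    {y : ℝ} (g1 : (2:ℝ)^k * j ≤ y) (g2 : y < (2:ℝ)^k * (j+1)) :
    (2:ℝ)^k' * j' ≤ y ∧ y < (2:ℝ)^k' * (j'+1) := by
  have hpow : (0:ℝ) < (2:ℝ)^k := by positivity
  set M : ℤ := 2 ^ (k' - k).toNat with hM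
  have hM2 : (2:ℝ)^k' = (2:ℝ)^k * (M:ℝ) := by
    rw [hM]
    push_cast
    rw [← zpow_natCast (2:ℝ) (k'-k).toNat, Int.toNat_of_nonneg (sub_nonneg.2 hk),
      ← zpow_add₀ (two_ne_zero) k (k' - k)]
    ring_nf
  have key1 : (2:ℝ)^k' * j' ≤ (2:ℝ)^k * j := by
    by_contra h
    push_neg at h
    rw [hM2, mul_assoc] at h
    have h5 : (j:ℝ) < (M:ℝ) * j' := by
      have := (mul_lt_mul_iff_right₀ hpow).1 h
      exact_mod_cast this
    have hint : (j:ℤ) + 1 ≤ M * j' := by exact_mod_cast Int.add_one_le_of_lt (by exact_mod_cast h5)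
    have h6 : (2:ℝ)^k * (j+1) ≤ (2:ℝ)^k' * j' := by
      rw [hM2, mul_assoc]
      apply mul_le_mul_of_nonneg_left _ hpow.le
      exact_mod_cast hint
    linarith
  have key2 : (2:ℝ)^k * (j+1) ≤ (2:ℝ)^k' * (j'+1) := by
    by_contra h
    push_neg at h
    rw [hM2, mul_assoc] at h
    have h5 : (M:ℝ) * (j'+1) < (j:ℝ) + 1 := by
      have := (mul_lt_mul_iff_right₀ hpow).1 h
      exact_mod_cast this
    have hint : M * (j' + 1) ≤ j := by
      have : M * (j' + 1) < j + 1 := by exact_mod_cast h5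
      omega
    have h6 : (2:ℝ)^k' * (j'+1) ≤ (2:ℝ)^k * j := by
      rw [hM2, mul_assoc]
      apply mul_le_mul_of_nonneg_left _ hpow.le
      exact_mod_cast hint
    linarith
  exact ⟨key1.trans g1, lt_of_lt_of_le g2 key2⟩

end DyadicHelper

namespace DyadicCube

variable {d : ℕ}

lemma measurableSet_toSet (Q : DyadicCube d) : MeasurableSet Q.toSet := by
  have : Q.toSet = Set.pi Set.univ
      (fun i => Set.Ico ((2:ℝ)^Q.k * (Q.j i)) ((2:ℝ)^Q.k * (Q.j i + 1))) := by
    ext x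
    simp [DyadicCube.toSet, Set.mem_pi, Set.mem_Ico]
  rw [this]
  exact MeasurableSet.univ_pi (fun i => measurableSet_Ico)

lemma nonempty_toSet (Q : DyadicCube d) : ∃ x, x ∈ Q.toSet := by
  refine ⟨fun i => (2:ℝ)^Q.k * (Q.j i), fun i => ⟨le_rfl, ?_⟩⟩
  have h : (0:ℝ) < (2:ℝ)^Q.k := by positivity
  have : ((Q.j i : ℝ)) < (Q.j i : ℝ) + 1 := by linarith
  exact mul_lt_mul_of_pos_left this h

lemma toSet_subset_Icc (Q : DyadicCube d) :
    Q.toSet ⊆ Set.Icc (fun i => (2:ℝ)^Q.k * (Q.j i)) (fun i => (2:ℝ)^Q.k * (Q.j i + 1)) :=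
  fun x hx => ⟨fun i => (hx i).1, fun i => (hx i).2.le⟩

lemma measure_toSet_lt_top (μ : Measure (Fin d → ℝ)) [IsLocallyFiniteMeasure μ]
    (Q : DyadicCube d) : μ Q.toSet < ∞ :=
  lt_of_le_of_lt (measure_mono (toSet_subset_Icc Q)) isCompact_Icc.measure_lt_top

lemma subset_of_mem_of_mem {Q R : DyadicCube d} (hk : Q.k ≤ R.k) {x : Fin d → ℝ}
    (hQ : x ∈ Q.toSet) (hR : x ∈ R.toSet) : Q.toSet ⊆ R.toSet := by
  intro y hy i
  exact DyadicHelper.interval_subset hk (hQ i).1 (hQ i).2 (hR i).1 (hR i).2 (hy i).1 (hy i).2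

lemma subset_or_subset {Q R : DyadicCube d} {x : Fin d → ℝ}
    (hQ : x ∈ Q.toSet) (hR : x ∈ R.toSet) : Q.toSet ⊆ R.toSet ∨ R.toSet ⊆ Q.toSet := by
  rcases le_total Q.k R.k with h | h
  · exact Or.inl (subset_of_mem_of_mem h hQ hR)
  · exact Or.inr (subset_of_mem_of_mem h hR hQ)

end DyadicCube

namespace StmtAux




lemma one_sub_rpow_le {s q : ℝ} (hs0 : 0 ≤ s) (hs1 : s ≤ 1) (hq : 1 ≤ q) :
    1 - s ^ q ≤ q * (1 - s) := by
  have h := one_add_mul_self_le_rpow_one_add (s := s - 1) (by linarith) hq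
  have he : (1 : ℝ) + (s - 1) = s := by ring
  rw [he] at h
  nlinarith

lemma mul_one_sub_le_one_sub_rpow {s r : ℝ} (hs0 : 0 ≤ s) (hs1 : s ≤ 1)
    (hr0 : 0 ≤ r) (hr1 : r ≤ 1) : r * (1 - s) ≤ 1 - s ^ r := by
  have h := rpow_one_add_le_one_add_mul_self (s := s - 1) (by linarith) hr0 hr1
  have he : (1 : ℝ) + (s - 1) = s := by ring
  rw [he] at h
  nlinarith

lemma real_chain {s t q : ℝ} (hq : 1 ≤ q) (hs : 0 ≤ s) (hst : s ≤ t) :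
    t ^ q - s ^ q ≤ q * ((t - s) * t ^ (q - 1)) := by
  have ht0 : 0 ≤ t := hs.trans hst
  rcases eq_or_lt_of_le ht0 with h0 | htpos
  · have hs0 : s = 0 := le_antisymm (hst.trans h0.symm.le) hs
    have h0' : t = 0 := h0.symm
    rw [hs0, h0']
    rw [Real.zero_rpow (by linarith : q ≠ 0)]
    simp
  · set u := s / t with hu
    have hu0 : 0 ≤ u := div_nonneg hs htpos.le
    have hu1 : u ≤ 1 := (div_le_one htpos).2 hst
    have key := one_sub_rpow_le hu0 hu1 hq
    have hsu : s = u * t := by rw [hu, div_mul_cancel₀ s htpos.ne']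
    have hsq : s ^ q = u ^ q * t ^ q := by rw [hsu, Real.mul_rpow hu0 htpos.le]
    have htq : t * t ^ (q - 1) = t ^ q := by
      have h := Real.rpow_add htpos 1 (q - 1)
      have h1q : 1 + (q - 1) = q := by ring
      rw [h1q, Real.rpow_one] at h
      exact h.symm
    have htqpos : 0 < t ^ q := Real.rpow_pos_of_pos htpos q
    have hrhs : (t - s) * t ^ (q - 1) = (1 - u) * t ^ q := by
      rw [hsu, ← htq]; ring
    rw [hsq, hrhs]
    nlinarith [key, htqpos]

lemma ennreal_chain {s t : ℝ≥0∞} {q : ℝ} (hq : 1 ≤ q) (hst : s ≤ t) (ht : t ≠ ∞) :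
    t ^ q ≤ s ^ q + ENNReal.ofReal q * ((t - s) * t ^ (q - 1)) := by
  have hs : s ≠ ∞ := ne_top_of_le_ne_top ht hst
  set T := t.toReal with hT
  set S := s.toReal with hS
  have hS0 : 0 ≤ S := ENNReal.toReal_nonneg
  have hT0 : 0 ≤ T := ENNReal.toReal_nonneg
  have hST : S ≤ T := ENNReal.toReal_le_toReal hs ht |>.2 hst
  have ht' : t = ENNReal.ofReal T := (ENNReal.ofReal_toReal ht).symm
  have hs' : s = ENNReal.ofReal S := (ENNReal.ofReal_toReal hs).symm
  rw [ht', hs']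
  rw [ENNReal.ofReal_rpow_of_nonneg hT0 (by linarith : (0:ℝ) ≤ q),
    ENNReal.ofReal_rpow_of_nonneg hS0 (by linarith : (0:ℝ) ≤ q),
    ENNReal.ofReal_rpow_of_nonneg hT0 (by linarith : (0:ℝ) ≤ q - 1),
    ← ENNReal.ofReal_sub _ hS0,
    ← ENNReal.ofReal_mul (by linarith : (0:ℝ) ≤ T - S),
    ← ENNReal.ofReal_mul (by linarith : (0:ℝ) ≤ q),
    ← ENNReal.ofReal_add (Real.rpow_nonneg hS0 q)
      (mul_nonneg (by linarith) (mul_nonneg (by linarith) (Real.rpow_nonneg hT0 _)))]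
  exact ENNReal.ofReal_le_ofReal (by nlinarith [real_chain hq hS0 hST])

lemma real_doob {m l p : ℝ} (hp : 1 < p) (h0 : 0 ≤ m) (hml : m ≤ l) :
    l ^ p - m ^ p ≤ (2 + (p - 1)⁻¹) * (l * (l ^ (p - 1) - m ^ (p - 1))) := by
  have hl0 : 0 ≤ l := h0.trans hml
  have hp1 : (0:ℝ) < p - 1 := by linarith
  have hipos : (0:ℝ) ≤ (p - 1)⁻¹ := by positivity
  rcases eq_or_lt_of_le hl0 with h0' | hlpos
  · have hm0 : m = 0 := le_antisymm (hml.trans h0'.symm.le) h0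
    rw [hm0, ← h0']
    rw [Real.zero_rpow (by linarith : p ≠ 0)]
    simp
  · set u := m / l with hu
    have hu0 : 0 ≤ u := div_nonneg h0 hlpos.le
    have hu1 : u ≤ 1 := (div_le_one hlpos).2 hml
    have hupm : u ^ (p-1) ≤ 1 := Real.rpow_le_one hu0 hu1 hp1.le
    -- key2 : 1 - u ≤ (1 + (p-1)⁻¹) * (1 - u^(p-1))
    have key2 : 1 - u ≤ (1 + (p - 1)⁻¹) * (1 - u ^ (p - 1)) := by
      rcases eq_or_lt_of_le hu0 with hu0' | hupos
      · rw [← hu0', Real.zero_rpow (by linarith : p - 1 ≠ 0)]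
        nlinarith
      · rcases le_or_gt 1 (p - 1) with hc | hc
        · have : u ^ (p-1) ≤ u := by
            calc u ^ (p - 1) ≤ u ^ (1:ℝ) := Real.rpow_le_rpow_of_exponent_ge hupos hu1 hc
            _ = u := Real.rpow_one u
          nlinarith
        · have h3 := mul_one_sub_le_one_sub_rpow hu0 hu1 hp1.le hc.le
          have h4 : (p - 1)⁻¹ * (p - 1) = 1 := inv_mul_cancel₀ (by linarith)
          nlinarith
    have key : 1 - u ^ p ≤ (2 + (p - 1)⁻¹) * (1 - u ^ (p - 1)) := by
      rcases eq_or_lt_of_le hu0 with hu0' | hupos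
      · rw [← hu0', Real.zero_rpow (by linarith : p ≠ 0),
          Real.zero_rpow (by linarith : p - 1 ≠ 0)]
        nlinarith
      · have hup : u ^ p = u ^ (p - 1) * u := by
          have h := Real.rpow_add hupos (p - 1) 1
          have h1q : p - 1 + 1 = p := by ring
          rw [h1q, Real.rpow_one] at h
          exact h
        nlinarith [hup, key2, hupm, hu1]
    have hml' : m = u * l := by rw [hu, div_mul_cancel₀ m hlpos.ne']
    have hmp : m ^ p = u ^ p * l ^ p := by rw [hml', Real.mul_rpow hu0 hlpos.le]
    have hmp1 : m ^ (p-1) = u ^ (p-1) * l ^ (p-1) := by rw [hml', Real.mul_rpow hu0 hlpos.le]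
    have hlq : l * l ^ (p - 1) = l ^ p := by
      have h := Real.rpow_add hlpos 1 (p - 1)
      have h1q : 1 + (p - 1) = p := by ring
      rw [h1q, Real.rpow_one] at h
      exact h.symm
    have hlppos : 0 < l ^ p := Real.rpow_pos_of_pos hlpos p
    have hexp : l * (l ^ (p-1) - m ^ (p-1)) = (1 - u ^ (p-1)) * l ^ p := by
      rw [hmp1, ← hlq]; ring
    rw [hmp, hexp]
    nlinarith [key, hlppos]

lemma ennreal_doob {ν lam : ℝ≥0∞} {p : ℝ} (hp : 1 < p) (hle : ν ≤ lam) (hlam : lam ≠ ∞) :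
    lam ^ p - ν ^ p ≤ ENNReal.ofReal (2 + (p - 1)⁻¹) * lam * (lam ^ (p - 1) - ν ^ (p - 1)) := by
  have hν : ν ≠ ∞ := ne_top_of_le_ne_top hlam hle
  set L := lam.toReal
  set N := ν.toReal
  have hN0 : 0 ≤ N := ENNReal.toReal_nonneg
  have hL0 : 0 ≤ L := ENNReal.toReal_nonneg
  have hNL : N ≤ L := ENNReal.toReal_le_toReal hν hlam |>.2 hle
  have hl' : lam = ENNReal.ofReal L := (ENNReal.ofReal_toReal hlam).symm
  have hn' : ν = ENNReal.ofReal N := (ENNReal.ofReal_toReal hν).symm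
  have hppos : (0:ℝ) ≤ p := by linarith
  have hp1 : (0:ℝ) ≤ p - 1 := by linarith
  rw [hl', hn']
  rw [ENNReal.ofReal_rpow_of_nonneg hL0 hppos, ENNReal.ofReal_rpow_of_nonneg hN0 hppos,
    ENNReal.ofReal_rpow_of_nonneg hL0 hp1, ENNReal.ofReal_rpow_of_nonneg hN0 hp1,
    ← ENNReal.ofReal_sub _ (Real.rpow_nonneg hN0 p),
    ← ENNReal.ofReal_sub _ (Real.rpow_nonneg hN0 (p-1)),
    ← ENNReal.ofReal_mul (by positivity : (0:ℝ) ≤ 2 + (p-1)⁻¹),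
    ← ENNReal.ofReal_mul (by positivity)]
  refine ENNReal.ofReal_le_ofReal ?_
  have := real_doob hp hN0 hNL
  nlinarith [this]







lemma exists_top {ι : Type*} (B : ι → ι → Prop) (s : Finset ι) (hne : s.Nonempty)
    (htot : ∀ x ∈ s, ∀ y ∈ s, B x y ∨ B y x)
    (htrans : ∀ x ∈ s, ∀ y ∈ s, ∀ z ∈ s, B x y → B y z → B x z) :
    ∃ x ∈ s, ∀ y ∈ s, B y x := by
  classical
  induction s using Finset.induction with
  | empty => exact absurd hne (by simp)
  | @insert a s ha ih =>
    rcases s.eq_empty_or_nonempty with rfl | hs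
    · refine ⟨a, Finset.mem_insert_self a _, fun y hy => ?_⟩
      rw [Finset.mem_insert] at hy
      rcases hy with rfl | hy
      · rcases htot y (Finset.mem_insert_self y _) y (Finset.mem_insert_self y _) with h | h <;>
          exact h
      · simp at hy
    · obtain ⟨t, hts, htop⟩ := ih hs
        (fun x hx y hy => htot x (Finset.mem_insert_of_mem hx) y (Finset.mem_insert_of_mem hy))
        (fun x hx y hy z hz => htrans x (Finset.mem_insert_of_mem hx) y
          (Finset.mem_insert_of_mem hy) z (Finset.mem_insert_of_mem hz))
      have hts' := Finset.mem_insert_of_mem (b := a) hts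
      have haa := Finset.mem_insert_self a s
      rcases htot t hts' a haa with h | h
      · refine ⟨a, haa, fun y hy => ?_⟩
        rw [Finset.mem_insert] at hy
        rcases hy with rfl | hy
        · rcases htot y haa y haa with h' | h' <;> exact h'
        · exact htrans y (Finset.mem_insert_of_mem hy) t hts' a haa (htop y hy) h
      · refine ⟨t, hts', fun y hy => ?_⟩
        rw [Finset.mem_insert] at hy
        rcases hy with rfl | hy
        · exact h
        · exact htop y hy

lemma chain_sum_rpow {ι : Type*} {q : ℝ} (hq : 1 ≤ q) (B : ι → ι → Prop)
    (a τ : ι → ℝ≥0∞) :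
    ∀ s : Finset ι, (∀ x ∈ s, a x ≠ ∞) →
    (∀ x ∈ s, ∀ y ∈ s, B x y ∨ B y x) →
    (∀ x ∈ s, ∀ y ∈ s, ∀ z ∈ s, B x y → B y z → B x z) →
    (∀ x ∈ s, ∀ u : Finset ι, u ⊆ s → (∀ y ∈ u, B y x) → ∑ y ∈ u, a y ≤ τ x) →
    (∑ x ∈ s, a x) ^ q ≤ ENNReal.ofReal q * ∑ x ∈ s, a x * τ x ^ (q - 1) := by
  classical
  intro s
  induction s using Finset.strongInduction with
  | _ s ih =>
    intro hfin htot htrans hτ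
    rcases s.eq_empty_or_nonempty with rfl | hne
    · simp only [Finset.sum_empty]
      rw [ENNReal.zero_rpow_of_pos (by linarith : (0:ℝ) < q)]
      simp
    obtain ⟨x0, hx0, htop⟩ := exists_top B s hne htot htrans
    set s' := s.erase x0 with hs'
    have hsub : s' ⊂ s := Finset.erase_ssubset hx0
    have hsum : ∑ x ∈ s, a x = a x0 + ∑ x ∈ s', a x := (Finset.add_sum_erase s a hx0).symm
    have hS'fin : (∑ x ∈ s', a x) ≠ ∞ := by
      refine (ENNReal.sum_lt_top.2 fun x hx => ?_).ne
      exact (hfin x (Finset.mem_of_mem_erase hx)).lt_top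
    have hSfin : (∑ x ∈ s, a x) ≠ ∞ := by
      refine (ENNReal.sum_lt_top.2 fun x hx => ?_).ne
      exact (hfin x hx).lt_top
    have hle : ∑ x ∈ s', a x ≤ ∑ x ∈ s, a x := by
      rw [hsum]; exact le_add_self
    have hdiff : ∑ x ∈ s, a x - ∑ x ∈ s', a x = a x0 := by
      rw [hsum]; exact ENNReal.add_sub_cancel_right hS'fin
    have htau0 : ∑ x ∈ s, a x ≤ τ x0 := hτ x0 hx0 s le_rfl htop
    have step := ennreal_chain hq hle hSfin
    rw [hdiff] at step
    have hmono : (∑ x ∈ s, a x) ^ (q - 1) ≤ τ x0 ^ (q - 1) :=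
      ENNReal.rpow_le_rpow htau0 (by linarith)
    have step2 : (∑ x ∈ s, a x) ^ q ≤
        (∑ x ∈ s', a x) ^ q + ENNReal.ofReal q * (a x0 * τ x0 ^ (q - 1)) :=
      step.trans (add_le_add_right (mul_le_mul_right
        (mul_le_mul_right hmono _) _) _)
    have IH := ih s' hsub (fun x hx => hfin x (Finset.mem_of_mem_erase hx))
      (fun x hx y hy => htot x (Finset.mem_of_mem_erase hx) y (Finset.mem_of_mem_erase hy))
      (fun x hx y hy z hz => htrans x (Finset.mem_of_mem_erase hx) y
        (Finset.mem_of_mem_erase hy) z (Finset.mem_of_mem_erase hz))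
      (fun x hx u hu hyu => hτ x (Finset.mem_of_mem_erase hx) u
        (hu.trans (Finset.erase_subset _ _)) hyu)
    calc (∑ x ∈ s, a x) ^ q
        ≤ (∑ x ∈ s', a x) ^ q + ENNReal.ofReal q * (a x0 * τ x0 ^ (q - 1)) := step2
      _ ≤ ENNReal.ofReal q * ∑ x ∈ s', a x * τ x ^ (q - 1)
            + ENNReal.ofReal q * (a x0 * τ x0 ^ (q - 1)) := add_le_add_left IH _
      _ = ENNReal.ofReal q * (a x0 * τ x0 ^ (q - 1) + ∑ x ∈ s', a x * τ x ^ (q - 1)) := by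
            rw [mul_add]; ring
      _ = ENNReal.ofReal q * ∑ x ∈ s, a x * τ x ^ (q - 1) := by
            rw [Finset.add_sum_erase s (fun x => a x * τ x ^ (q - 1)) hx0]






noncomputable def prevE (V : Finset ℝ≥0∞) (v : ℝ≥0∞) : ℝ≥0∞ :=
  V.sup (fun w => if w < v then w else 0)

lemma prevE_le (V : Finset ℝ≥0∞) (v : ℝ≥0∞) : prevE V v ≤ v := by
  refine Finset.sup_le fun w _ => ?_
  split_ifs with h
  · exact h.le
  · exact zero_le

lemma prevE_erase {V : Finset ℝ≥0∞} {b v : ℝ≥0∞} (hb : b ∈ V) (hvb : v ≤ b) :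
    prevE (V.erase b) v = prevE V v := by
  simp only [prevE]
  conv_rhs => rw [← Finset.insert_erase hb, Finset.sup_insert]
  have h1 : (if b < v then b else 0) = 0 :=
    if_neg (fun h => absurd (hvb.trans_lt h) (lt_irrefl _))
  rw [h1]
  simp

lemma prevE_eq_max' {V : Finset ℝ≥0∞} {b : ℝ≥0∞}
    (h : (V.filter (fun w => w < b)).Nonempty) :
    prevE V b = (V.filter (fun w => w < b)).max' h := by
  obtain ⟨hb'V, hb'b⟩ := Finset.mem_filter.1 ((V.filter (fun w => w < b)).max'_mem h)
  apply le_antisymm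
  · refine Finset.sup_le fun w hw => ?_
    split_ifs with hlt
    · exact Finset.le_max' (V.filter (fun w => w < b)) w (Finset.mem_filter.2 ⟨hw, hlt⟩)
    · exact zero_le
  · have h2 := Finset.le_sup (f := fun w => if w < b then w else 0) hb'V
    simp only [prevE]
    simpa only [if_pos hb'b] using h2

lemma prevE_empty {V : Finset ℝ≥0∞} {b : ℝ≥0∞}
    (h : V.filter (fun w => w < b) = ∅) : prevE V b = 0 := by
  refine le_antisymm (Finset.sup_le fun w hw => ?_) (zero_le)
  split_ifs with hlt
  · exact absurd (h ▸ (Finset.mem_filter.2 ⟨hw, hlt⟩ : w ∈ V.filter (fun w => w < b)))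
      (Finset.notMem_empty w)
  · exact le_rfl

lemma tele (φ : ℝ≥0∞ → ℝ≥0∞) (hmono : Monotone φ) (hzero : φ 0 = 0) :
    ∀ V : Finset ℝ≥0∞, (∀ v ∈ V, φ v ≠ ∞) → ∀ b ∈ V,
      ∑ v ∈ V.filter (fun w => w ≤ b), (φ v - φ (prevE V v)) = φ b := by
  intro V
  induction V using Finset.strongInduction with
  | _ V ih =>
    intro hfin b hb
    have hsplit : V.filter (fun w => w ≤ b) = insert b (V.filter (fun w => w < b)) := by
      ext x
      simp only [Finset.mem_filter, Finset.mem_insert]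
      constructor
      · rintro ⟨hx, hxb⟩
        rcases eq_or_lt_of_le hxb with rfl | h
        · exact Or.inl rfl
        · exact Or.inr ⟨hx, h⟩
      · rintro (rfl | ⟨hx, h⟩)
        · exact ⟨hb, le_rfl⟩
        · exact ⟨hx, h.le⟩
    have hbW : b ∉ V.filter (fun w => w < b) := by simp
    rw [hsplit, Finset.sum_insert hbW]
    rcases (V.filter (fun w => w < b)).eq_empty_or_nonempty with hWe | hWne
    · rw [hWe, prevE_empty hWe, hzero, tsub_zero, Finset.sum_empty, add_zero]
    · obtain ⟨b', hb'⟩ : ∃ b', (V.filter (fun w => w < b)).max' hWne = b' := ⟨_, rfl⟩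
      obtain ⟨hb'V, hb'b⟩ := Finset.mem_filter.1
        (hb' ▸ (V.filter (fun w => w < b)).max'_mem hWne)
      have hprev : prevE V b = b' := hb' ▸ prevE_eq_max' hWne
      have hle : ∀ x ∈ V.filter (fun w => w < b), x ≤ b' := fun x hx =>
        hb' ▸ Finset.le_max' (V.filter (fun w => w < b)) x hx
      have hWeq : V.filter (fun w => w < b) = (V.erase b).filter (fun w => w ≤ b') := by
        ext x
        simp only [Finset.mem_filter, Finset.mem_erase]
        constructor
        · rintro ⟨hx, hxb⟩
          exact ⟨⟨ne_of_lt hxb, hx⟩, hle x (Finset.mem_filter.2 ⟨hx, hxb⟩)⟩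
        · rintro ⟨⟨hxb, hx⟩, hxle⟩
          exact ⟨hx, lt_of_le_of_lt hxle hb'b⟩
      have hsum2 : ∑ v ∈ V.filter (fun w => w < b), (φ v - φ (prevE V v)) =
          ∑ v ∈ (V.erase b).filter (fun w => w ≤ b'), (φ v - φ (prevE (V.erase b) v)) := by
        rw [← hWeq]
        refine Finset.sum_congr rfl fun v hv => ?_
        rw [prevE_erase hb (Finset.mem_filter.1 hv).2.le]
      have hIH := ih (V.erase b) (Finset.erase_ssubset hb)
        (fun v hv => hfin v (Finset.mem_of_mem_erase hv)) b'
        (Finset.mem_erase.2 ⟨ne_of_lt hb'b, hb'V⟩)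
      rw [hsum2, hIH, hprev]
      exact tsub_add_cancel_of_le (hmono hb'b.le)

lemma tele_le (φ : ℝ≥0∞ → ℝ≥0∞) (hmono : Monotone φ) (hzero : φ 0 = 0)
    (V : Finset ℝ≥0∞) (hfin : ∀ v ∈ V, φ v ≠ ∞) (c : ℝ≥0∞) :
    ∑ v ∈ V.filter (fun w => w ≤ c), (φ v - φ (prevE V v)) ≤ φ c := by
  rcases (V.filter (fun w => w ≤ c)).eq_empty_or_nonempty with he | hne
  · rw [he, Finset.sum_empty]; exact zero_le
  · obtain ⟨b, hbdef⟩ : ∃ b, (V.filter (fun w => w ≤ c)).max' hne = b := ⟨_, rfl⟩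
    obtain ⟨hbV, hbc⟩ := Finset.mem_filter.1
      (hbdef ▸ (V.filter (fun w => w ≤ c)).max'_mem hne)
    have hlemax : ∀ x ∈ V.filter (fun w => w ≤ c), x ≤ b := fun x hx =>
      hbdef ▸ Finset.le_max' (V.filter (fun w => w ≤ c)) x hx
    have heq : V.filter (fun w => w ≤ c) = V.filter (fun w => w ≤ b) := by
      ext x
      simp only [Finset.mem_filter]
      constructor
      · rintro ⟨hx, hxc⟩
        exact ⟨hx, hlemax x (Finset.mem_filter.2 ⟨hx, hxc⟩)⟩
      · rintro ⟨hx, hxb⟩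
        exact ⟨hx, hxb.trans hbc⟩
    rw [heq, tele φ hmono hzero V hfin b hbV]
    exact hmono hbc






variable {d : ℕ}

lemma measurable_finset_sup {α : Type*} [MeasurableSpace α] {ι : Type*} (s : Finset ι)
    (f : ι → α → ℝ≥0∞) (hf : ∀ i ∈ s, Measurable (f i)) :
    Measurable (fun x => s.sup (fun i => f i x)) := by
  classical
  induction s using Finset.induction with
  | empty => simpa using measurable_const
  | @insert a s ha ih =>
    simp only [Finset.sup_insert]
    exact Measurable.sup (hf a (Finset.mem_insert_self a s))
      (ih (fun i hi => hf i (Finset.mem_insert_of_mem hi)))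

/-- Integral of a finite sum of indicators with constant values. -/
lemma lintegral_sum_indicator (μ : Measure (Fin d → ℝ)) (G : Finset (DyadicCube d))
    (c : DyadicCube d → ℝ≥0∞) :
    ∫⁻ x, (∑ Q ∈ G, Q.toSet.indicator (fun _ => c Q) x) ∂μ = ∑ Q ∈ G, c Q * μ Q.toSet := by
  rw [lintegral_finset_sum]
  · exact Finset.sum_congr rfl fun Q _ => lintegral_indicator_const Q.measurableSet_toSet (c Q)
  · exact fun Q _ => Measurable.indicator measurable_const Q.measurableSet_toSet

/-- Sums of `A Q * μ Q` over cubes contained in a measurable set `W` are dominated by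
the integral of `f` over `W`, whenever the sum of indicators is pointwise below `f`. -/
lemma sum_le_setLIntegral (μ : Measure (Fin d → ℝ)) (G : Finset (DyadicCube d))
    (A : DyadicCube d → ℝ≥0∞) (f : (Fin d → ℝ) → ℝ≥0∞) {W : Set (Fin d → ℝ)}
    (hW : MeasurableSet W) (hsub : ∀ Q ∈ G, Q.toSet ⊆ W)
    (hle : ∀ x, (∑ Q ∈ G, Q.toSet.indicator (fun _ => A Q) x) ≤ f x) :
    ∑ Q ∈ G, A Q * μ Q.toSet ≤ ∫⁻ x in W, f x ∂μ := by
  rw [← lintegral_sum_indicator μ G A]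
  have hpt : ∀ x, (∑ Q ∈ G, Q.toSet.indicator (fun _ => A Q) x) ≤ W.indicator f x := by
    intro x
    by_cases hx : x ∈ W
    · rw [Set.indicator_of_mem hx]
      exact hle x
    · rw [Set.indicator_of_notMem hx]
      have : ∀ Q ∈ G, Q.toSet.indicator (fun _ => A Q) x = 0 := fun Q hQ =>
        Set.indicator_of_notMem (fun hxQ => hx (hsub Q hQ hxQ)) _
      rw [Finset.sum_eq_zero this]
    
  calc ∫⁻ x, (∑ Q ∈ G, Q.toSet.indicator (fun _ => A Q) x) ∂μ
      ≤ ∫⁻ x, W.indicator f x ∂μ := lintegral_mono hpt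
    _ = ∫⁻ x in W, f x ∂μ := lintegral_indicator hW f

/-- The maximal-cube covering estimate. -/
lemma claimA (μ : Measure (Fin d → ℝ)) (f : (Fin d → ℝ) → ℝ≥0∞) (v : ℝ≥0∞) :
    ∀ G : Finset (DyadicCube d),
      (∀ Q ∈ G, v * μ Q.toSet ≤ ∫⁻ x in Q.toSet, f x ∂μ) →
      v * μ (⋃ Q ∈ G, Q.toSet) ≤ ∫⁻ x in (⋃ Q ∈ G, Q.toSet), f x ∂μ := by
  classical
  intro G
  induction G using Finset.strongInduction with
  | _ G ih =>
    intro hG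
    rcases G.eq_empty_or_nonempty with rfl | hne
    · simp
    obtain ⟨Q0, hQ0, hmax⟩ := G.exists_max_image (fun Q => Q.k) hne
    set G' := G.filter (fun Q' => ¬ Q'.toSet ⊆ Q0.toSet) with hG'
    have hsubQ0 : ∀ Q' ∈ G', Disjoint Q'.toSet Q0.toSet := by
      intro Q' hQ'
      rw [hG', Finset.mem_filter] at hQ'
      by_contra hdis
      rw [Set.not_disjoint_iff] at hdis
      obtain ⟨x, hx', hx0⟩ := hdis
      exact hQ'.2 (DyadicCube.subset_of_mem_of_mem (hmax Q' hQ'.1) hx' hx0)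
    have hunion : (⋃ Q ∈ G, Q.toSet) = Q0.toSet ∪ ⋃ Q ∈ G', Q.toSet := by
      ext x
      simp only [Set.mem_iUnion, Set.mem_union, exists_prop]
      constructor
      · rintro ⟨Q, hQ, hx⟩
        by_cases hss : Q.toSet ⊆ Q0.toSet
        · exact Or.inl (hss hx)
        · exact Or.inr ⟨Q, by rw [hG', Finset.mem_filter]; exact ⟨hQ, hss⟩, hx⟩
      · rintro (hx | ⟨Q, hQ, hx⟩)
        · exact ⟨Q0, hQ0, hx⟩
        · exact ⟨Q, by rw [hG', Finset.mem_filter] at hQ; exact hQ.1, hx⟩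
    have hmeasU' : MeasurableSet (⋃ Q ∈ G', Q.toSet) :=
      G'.measurableSet_biUnion (fun Q _ => Q.measurableSet_toSet)
    have hdisj : Disjoint Q0.toSet (⋃ Q ∈ G', Q.toSet) := by
      rw [Set.disjoint_iff_inter_eq_empty]
      ext x
      simp only [Set.mem_inter_iff, Set.mem_iUnion, exists_prop, Set.mem_empty_iff_false,
        iff_false, not_and]
      rintro hx0 ⟨Q', hQ', hx'⟩
      exact (hsubQ0 Q' hQ').le_bot ⟨hx', hx0⟩
    have hss : G' ⊂ G := by
      rw [hG']
      refine Finset.ssubset_iff_of_subset (Finset.filter_subset _ _) |>.2 ⟨Q0, hQ0, ?_⟩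
      rw [Finset.mem_filter]
      push_neg
      intro _
      exact subset_rfl
    have hIH := ih G' hss (fun Q hQ => hG Q (Finset.filter_subset _ _ hQ))
    rw [hunion, measure_union hdisj hmeasU', lintegral_union hmeasU' hdisj, mul_add]
    exact add_le_add (hG Q0 hQ0) hIH




variable {d : ℕ}




attribute [local instance 10] Classical.propDecidable

lemma sum_indicator_filter (F : Finset (DyadicCube d)) (c : DyadicCube d → ℝ≥0∞)
    (x : Fin d → ℝ) :
    ∑ Q ∈ F, Q.toSet.indicator (fun _ => c Q) x
      = ∑ Q ∈ F.filter (fun Q => x ∈ Q.toSet), c Q := by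
  classical
  rw [Finset.sum_filter]
  refine Finset.sum_congr rfl fun Q _ => ?_
  by_cases h : x ∈ Q.toSet
  · rw [Set.indicator_of_mem h, if_pos h]
  · rw [Set.indicator_of_notMem h, if_neg h]

lemma pointwise_small {p : ℝ} (hp : 1 ≤ p) (F : Finset (DyadicCube d))
    (A : DyadicCube d → ℝ≥0∞) (hAfin : ∀ Q, A Q ≠ ∞) (x : Fin d → ℝ) :
    (∑ Q ∈ F, Q.toSet.indicator (fun _ => A Q) x) ^ p ≤ ENNReal.ofReal p *
      ∑ Q ∈ F, Q.toSet.indicator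
        (fun _ => A Q * (∑ R ∈ F.filter (fun R => R.toSet ⊆ Q.toSet),
          R.toSet.indicator (fun _ => A R) x) ^ (p - 1)) x := by
  classical
  rw [sum_indicator_filter, sum_indicator_filter]
  have key := chain_sum_rpow hp (fun Q R : DyadicCube d => Q.toSet ⊆ R.toSet) A
    (fun Q => ∑ R ∈ F.filter (fun R => R.toSet ⊆ Q.toSet), R.toSet.indicator (fun _ => A R) x)
    (F.filter (fun Q => x ∈ Q.toSet))
    (fun Q _ => hAfin Q)
    (fun Q hQ R hR => DyadicCube.subset_or_subset
      (Finset.mem_filter.1 hQ).2 (Finset.mem_filter.1 hR).2)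
    (fun Q _ R _ T _ h1 h2 => h1.trans h2)
    ?_
  · exact key
  · intro Q hQ u hu hall
    have h1 : ∑ R ∈ u, A R = ∑ R ∈ u, R.toSet.indicator (fun _ => A R) x :=
      Finset.sum_congr rfl fun R hR =>
        (Set.indicator_of_mem ((Finset.mem_filter.1 (hu hR)).2) (fun _ => A R)).symm
    rw [h1]
    refine Finset.sum_le_sum_of_subset fun R hR => Finset.mem_filter.2
      ⟨(Finset.mem_filter.1 (hu hR)).1, hall R hR⟩

lemma pointwise_big {p : ℝ} (hp : 1 ≤ p) (F : Finset (DyadicCube d))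
    (A : DyadicCube d → ℝ≥0∞) (hAfin : ∀ Q, A Q ≠ ∞) (x : Fin d → ℝ) :
    (∑ Q ∈ F, Q.toSet.indicator (fun _ => A Q) x) ^ p ≤ ENNReal.ofReal p *
      ∑ Q ∈ F, Q.toSet.indicator
        (fun _ => A Q * (∑ R ∈ F.filter (fun R => Q.toSet ⊆ R.toSet), A R) ^ (p - 1)) x := by
  classical
  rw [sum_indicator_filter, sum_indicator_filter]
  have key := chain_sum_rpow hp (fun Q R : DyadicCube d => R.toSet ⊆ Q.toSet) A
    (fun Q => ∑ R ∈ F.filter (fun R => Q.toSet ⊆ R.toSet), A R)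
    (F.filter (fun Q => x ∈ Q.toSet))
    (fun Q _ => hAfin Q)
    (fun Q hQ R hR => by
      exact (DyadicCube.subset_or_subset
        (Finset.mem_filter.1 hQ).2 (Finset.mem_filter.1 hR).2).symm)
    (fun Q _ R _ T _ h1 h2 => h2.trans h1)
    ?_
  · exact key
  · intro Q hQ u hu hall
    refine Finset.sum_le_sum_of_subset fun R hR => Finset.mem_filter.2
      ⟨(Finset.mem_filter.1 (hu hR)).1, hall R hR⟩



lemma upper_small (μ : Measure (Fin d → ℝ)) {p : ℝ} (hp : 1 < p) (hp2 : p ≤ 2)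
    (F : Finset (DyadicCube d)) (A : DyadicCube d → ℝ≥0∞) (hAfin : ∀ Q, A Q ≠ ∞)
    (hmfin : ∀ Q : DyadicCube d, μ Q.toSet ≠ ∞) :
    ∫⁻ x, (∑ Q ∈ F, Q.toSet.indicator (fun _ => A Q) x) ^ p ∂μ ≤ ENNReal.ofReal p *
      ∑ Q ∈ F, (A Q * μ Q.toSet) *
        ((μ Q.toSet)⁻¹ *
          ∑ R ∈ F.filter (fun R => R.toSet ⊆ Q.toSet), A R * μ R.toSet) ^ (p - 1) := by
  set g : DyadicCube d → (Fin d → ℝ) → ℝ≥0∞ := fun Q y =>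
    ∑ R ∈ F.filter (fun R => R.toSet ⊆ Q.toSet), R.toSet.indicator (fun _ => A R) y with hg
  set S : DyadicCube d → ℝ≥0∞ :=
    fun Q => ∑ R ∈ F.filter (fun R => R.toSet ⊆ Q.toSet), A R * μ R.toSet with hSdef
  have hgmeas : ∀ Q, Measurable (g Q) := fun Q => Finset.measurable_sum _
    (fun R _ => measurable_const.indicator R.measurableSet_toSet)
  have hSfin : ∀ Q, S Q ≠ ∞ := fun Q =>
    (ENNReal.sum_lt_top.2 fun R _ =>
      (ENNReal.mul_lt_top (hAfin R).lt_top (hmfin R).lt_top)).ne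
  have hgint : ∀ Q, ∫⁻ y, g Q y ∂μ = S Q := fun Q => lintegral_sum_indicator μ _ A
  have hptw : ∀ x, (∑ Q ∈ F, Q.toSet.indicator (fun _ => A Q) x) ^ p
      ≤ ENNReal.ofReal p *
        ∑ Q ∈ F, Q.toSet.indicator (fun y => A Q * (g Q y) ^ (p - 1)) x := by
    intro x
    refine (pointwise_small hp.le F A hAfin x).trans ?_
    refine mul_le_mul_right (le_of_eq (Finset.sum_congr rfl fun Q _ => ?_)) _
    by_cases h : x ∈ Q.toSet
    · rw [Set.indicator_of_mem h, Set.indicator_of_mem h]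
    · rw [Set.indicator_of_notMem h, Set.indicator_of_notMem h]
  have hmeasQ : ∀ Q : DyadicCube d, Measurable fun y => A Q * (g Q y) ^ (p - 1) :=
    fun Q => ((hgmeas Q).pow_const _).const_mul _
  have hQbound : ∀ Q ∈ F, ∫⁻ x, Q.toSet.indicator (fun y => A Q * (g Q y) ^ (p - 1)) x ∂μ
      ≤ (A Q * μ Q.toSet) * ((μ Q.toSet)⁻¹ * S Q) ^ (p - 1) := by
    intro Q _
    rw [lintegral_indicator Q.measurableSet_toSet,
      lintegral_const_mul _ ((hgmeas Q).pow_const _)]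
    by_cases hm0 : μ Q.toSet = 0
    · have hr : μ.restrict Q.toSet = 0 := Measure.restrict_eq_zero.2 hm0
      rw [hr, lintegral_zero_measure, mul_zero]
      exact zero_le
    · have hJ : ∫⁻ y in Q.toSet, (g Q y) ^ (p - 1) ∂μ
          ≤ S Q ^ (p - 1) * μ Q.toSet ^ (1 - (p - 1)) := by
        rcases eq_or_lt_of_le hp2 with hpe | hplt
        · subst hpe
          have e1 : (2:ℝ) - 1 = 1 := by norm_num
          rw [e1]
          have e2 : (1:ℝ) - 1 = 0 := by norm_num
          rw [e2, ENNReal.rpow_zero, mul_one]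
          simp only [ENNReal.rpow_one]
          calc ∫⁻ y in Q.toSet, g Q y ∂μ ≤ ∫⁻ y, g Q y ∂μ :=
                setLIntegral_le_lintegral _ _
            _ = S Q := hgint Q
        · set q := p - 1 with hqdef
          have hq0 : 0 < q := by simp only [hqdef]; linarith
          have hq1 : q < 1 := by simp only [hqdef]; linarith
          have hpq : (1/q).HolderConjugate (1/(1-q)) := by
            rw [Real.holderConjugate_iff]
            constructor
            · rw [lt_div_iff₀ hq0]; linarith
            · rw [one_div, one_div, inv_inv, inv_inv]; ring
          have happ := ENNReal.lintegral_mul_le_Lp_mul_Lq μ hpq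
            (f := fun y => (g Q y) ^ q) (g := Q.toSet.indicator (fun _ => (1:ℝ≥0∞)))
            ((hgmeas Q).pow_const _).aemeasurable
            (measurable_const.indicator Q.measurableSet_toSet).aemeasurable
          have hL : (fun y => ((fun y => (g Q y) ^ q) * Q.toSet.indicator (fun _ => (1:ℝ≥0∞))) y)
              = fun y => Q.toSet.indicator (fun z => (g Q z) ^ q) y := by
            funext y
            simp only [Pi.mul_apply]
            by_cases h : y ∈ Q.toSet
            · rw [Set.indicator_of_mem h, Set.indicator_of_mem h, mul_one]
            · rw [Set.indicator_of_notMem h, Set.indicator_of_notMem h, mul_zero]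
          have hf1 : (∫⁻ y, ((g Q y) ^ q) ^ (1/q) ∂μ) = ∫⁻ y, g Q y ∂μ := by
            refine lintegral_congr fun y => ?_
            rw [← ENNReal.rpow_mul, mul_one_div_cancel hq0.ne', ENNReal.rpow_one]
          have hg1 : (∫⁻ y, (Q.toSet.indicator (fun _ => (1:ℝ≥0∞)) y) ^ (1/(1-q)) ∂μ)
              = μ Q.toSet := by
            have : ∀ y, (Q.toSet.indicator (fun _ => (1:ℝ≥0∞)) y) ^ (1/(1-q))
                = Q.toSet.indicator (fun _ => (1:ℝ≥0∞)) y := by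
              intro y
              by_cases h : y ∈ Q.toSet
              · rw [Set.indicator_of_mem h, ENNReal.one_rpow]
              · rw [Set.indicator_of_notMem h,
                  ENNReal.zero_rpow_of_pos (div_pos one_pos (by linarith) : (0:ℝ) < 1/(1-q))]
            rw [lintegral_congr this, lintegral_indicator_const Q.measurableSet_toSet, one_mul]
          rw [hL] at happ
          rw [hf1, hg1, hgint Q] at happ
          rw [lintegral_indicator Q.measurableSet_toSet] at happ
          have he1 : (1:ℝ)/(1/q) = q := one_div_one_div q
          have he2 : (1:ℝ)/(1/(1-q)) = 1-q := one_div_one_div _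
          rw [he1, he2] at happ
          exact happ
      calc A Q * ∫⁻ y in Q.toSet, (g Q y) ^ (p - 1) ∂μ
          ≤ A Q * (S Q ^ (p - 1) * μ Q.toSet ^ (1 - (p - 1))) := mul_le_mul_right hJ _
        _ = (A Q * μ Q.toSet) * ((μ Q.toSet)⁻¹ * S Q) ^ (p - 1) := by
            have hmsplit : μ Q.toSet ^ (1 - (p-1))
                = μ Q.toSet * (μ Q.toSet ^ (p-1))⁻¹ := by
              rw [sub_eq_add_neg, ENNReal.rpow_add _ _ hm0 (hmfin Q), ENNReal.rpow_one,
                ENNReal.rpow_neg]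
            rw [ENNReal.mul_rpow_of_ne_top (ENNReal.inv_ne_top.2 hm0) (hSfin Q),
              ENNReal.inv_rpow, hmsplit]
            ring
  calc ∫⁻ x, (∑ Q ∈ F, Q.toSet.indicator (fun _ => A Q) x) ^ p ∂μ
      ≤ ∫⁻ x, ENNReal.ofReal p *
          ∑ Q ∈ F, Q.toSet.indicator (fun y => A Q * (g Q y) ^ (p - 1)) x ∂μ :=
        lintegral_mono hptw
    _ = ENNReal.ofReal p *
        ∫⁻ x, ∑ Q ∈ F, Q.toSet.indicator (fun y => A Q * (g Q y) ^ (p - 1)) x ∂μ :=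
        lintegral_const_mul _ (Finset.measurable_sum _ fun Q _ =>
          (hmeasQ Q).indicator Q.measurableSet_toSet)
    _ = ENNReal.ofReal p *
        ∑ Q ∈ F, ∫⁻ x, Q.toSet.indicator (fun y => A Q * (g Q y) ^ (p - 1)) x ∂μ := by
        rw [lintegral_finset_sum _ fun Q _ => (hmeasQ Q).indicator Q.measurableSet_toSet]
    _ ≤ ENNReal.ofReal p *
        ∑ Q ∈ F, (A Q * μ Q.toSet) * ((μ Q.toSet)⁻¹ * S Q) ^ (p - 1) :=
        mul_le_mul_right (Finset.sum_le_sum hQbound) _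


lemma upper_big (μ : Measure (Fin d → ℝ)) {p : ℝ} (hp2 : 2 < p)
    (F : Finset (DyadicCube d)) (A : DyadicCube d → ℝ≥0∞) (hAfin : ∀ Q, A Q ≠ ∞)
    (hmfin : ∀ Q : DyadicCube d, μ Q.toSet ≠ ∞) :
    ∫⁻ x, (∑ Q ∈ F, Q.toSet.indicator (fun _ => A Q) x) ^ p ∂μ ≤
      (ENNReal.ofReal p * ENNReal.ofReal (p - 1) ^ (p - 1)) *
      ∑ Q ∈ F, (A Q * μ Q.toSet) *
        ((μ Q.toSet)⁻¹ *
          ∑ R ∈ F.filter (fun R => R.toSet ⊆ Q.toSet), A R * μ R.toSet) ^ (p - 1) := by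
  have hp : 1 < p := by linarith
  have hne1 : p - (1:ℝ) ≠ 0 := by linarith
  have hne2 : p - (2:ℝ) ≠ 0 := by linarith
  set t : DyadicCube d → ℝ≥0∞ :=
    fun Q => ∑ R ∈ F.filter (fun R => Q.toSet ⊆ R.toSet), A R with htdef
  set S : DyadicCube d → ℝ≥0∞ :=
    fun Q => ∑ R ∈ F.filter (fun R => R.toSet ⊆ Q.toSet), A R * μ R.toSet with hSdef
  set w : DyadicCube d → ℝ≥0∞ := fun Q => A Q * μ Q.toSet with hwdef
  set AV : DyadicCube d → ℝ≥0∞ := fun Q => (μ Q.toSet)⁻¹ * S Q with hAVdef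
  set Sig : ℝ≥0∞ := ∑ Q ∈ F, w Q * AV Q ^ (p - 1) with hSig
  set D : ℝ≥0∞ := ∑ Q ∈ F, w Q * t Q ^ (p - 1) with hDdef
  have htfin : ∀ Q, t Q ≠ ∞ := fun Q =>
    (ENNReal.sum_lt_top.2 fun R _ => (hAfin R).lt_top).ne
  have hSfin : ∀ Q, S Q ≠ ∞ := fun Q =>
    (ENNReal.sum_lt_top.2 fun R _ =>
      ENNReal.mul_lt_top (hAfin R).lt_top (hmfin R).lt_top).ne
  have hwfin : ∀ Q, w Q ≠ ∞ := fun Q => ENNReal.mul_ne_top (hAfin Q) (hmfin Q)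
  have hS0 : ∀ Q : DyadicCube d, μ Q.toSet = 0 → S Q = 0 := by
    intro Q h0
    refine Finset.sum_eq_zero fun R hR => ?_
    have hz : μ R.toSet = 0 :=
      le_antisymm (h0 ▸ measure_mono (Finset.mem_filter.1 hR).2) (zero_le)
    rw [hz, mul_zero]
  have hAVfin : ∀ Q, AV Q ≠ ∞ := by
    intro Q
    by_cases h0 : μ Q.toSet = 0
    · rw [hAVdef]
      simp only [hS0 Q h0, mul_zero]
      exact ENNReal.zero_ne_top
    · exact ENNReal.mul_ne_top (ENNReal.inv_ne_top.2 h0) (hSfin Q)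
  have hint : ∫⁻ x, (∑ Q ∈ F, Q.toSet.indicator (fun _ => A Q) x) ^ p ∂μ
      ≤ ENNReal.ofReal p * D := by
    calc ∫⁻ x, (∑ Q ∈ F, Q.toSet.indicator (fun _ => A Q) x) ^ p ∂μ
        ≤ ∫⁻ x, ENNReal.ofReal p *
            ∑ Q ∈ F, Q.toSet.indicator (fun _ => A Q * t Q ^ (p - 1)) x ∂μ :=
          lintegral_mono fun x => pointwise_big hp.le F A hAfin x
      _ = ENNReal.ofReal p *
          ∫⁻ x, ∑ Q ∈ F, Q.toSet.indicator (fun _ => A Q * t Q ^ (p - 1)) x ∂μ :=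
          lintegral_const_mul _ (Finset.measurable_sum _ fun Q _ =>
            measurable_const.indicator Q.measurableSet_toSet)
      _ = ENNReal.ofReal p * ∑ Q ∈ F, (A Q * t Q ^ (p - 1)) * μ Q.toSet := by
          rw [lintegral_sum_indicator]
      _ = ENNReal.ofReal p * D := by
          rw [hDdef]
          congr 1
          refine Finset.sum_congr rfl fun Q _ => ?_
          rw [hwdef]
          ring
  have hchain2 : ∀ Q ∈ F, t Q ^ (p - 1) ≤ ENNReal.ofReal (p - 1) *
      ∑ R ∈ F.filter (fun R => Q.toSet ⊆ R.toSet), A R * t R ^ (p - 2) := by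
    intro Q _
    obtain ⟨x0, hx0⟩ := Q.nonempty_toSet
    have key := chain_sum_rpow (by linarith : 1 ≤ p - 1)
      (fun R R' : DyadicCube d => R'.toSet ⊆ R.toSet) A t
      (F.filter (fun R => Q.toSet ⊆ R.toSet))
      (fun R _ => hAfin R)
      (fun R hR R' hR' => by
        exact (DyadicCube.subset_or_subset ((Finset.mem_filter.1 hR).2 hx0)
          ((Finset.mem_filter.1 hR').2 hx0)).symm)
      (fun a _ b _ c _ h1 h2 => h2.trans h1)
      (fun R hR u hu hall => Finset.sum_le_sum_of_subset fun y hy =>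
        Finset.mem_filter.2 ⟨(Finset.mem_filter.1 (hu hy)).1, hall y hy⟩)
    have he : p - 1 - 1 = p - 2 := by ring
    rw [he] at key
    exact key
  have hswap : ∑ Q ∈ F, w Q *
        ∑ R ∈ F.filter (fun R => Q.toSet ⊆ R.toSet), A R * t R ^ (p - 2)
      = ∑ R ∈ F, (A R * t R ^ (p - 2)) * S R := by
    have e1 : ∀ Q : DyadicCube d, w Q *
          ∑ R ∈ F.filter (fun R => Q.toSet ⊆ R.toSet), A R * t R ^ (p - 2)
        = ∑ R ∈ F, if Q.toSet ⊆ R.toSet then w Q * (A R * t R ^ (p - 2)) else 0 := by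
      intro Q
      rw [Finset.mul_sum, Finset.sum_filter]
    have e2 : ∀ R : DyadicCube d, (A R * t R ^ (p - 2)) * S R
        = ∑ Q ∈ F, if Q.toSet ⊆ R.toSet then w Q * (A R * t R ^ (p - 2)) else 0 := by
      intro R
      rw [← Finset.sum_filter, ← Finset.sum_mul, mul_comm]
    rw [Finset.sum_congr rfl fun Q _ => e1 Q, Finset.sum_comm,
      ← Finset.sum_congr rfl fun R _ => e2 R]
  have hD1 : D ≤ ENNReal.ofReal (p - 1) * ∑ R ∈ F, (A R * t R ^ (p - 2)) * S R := by
    calc D ≤ ∑ Q ∈ F, w Q * (ENNReal.ofReal (p - 1) *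
          ∑ R ∈ F.filter (fun R => Q.toSet ⊆ R.toSet), A R * t R ^ (p - 2)) :=
        Finset.sum_le_sum fun Q hQ => mul_le_mul_right (hchain2 Q hQ) _
      _ = ENNReal.ofReal (p - 1) * ∑ Q ∈ F, w Q *
          ∑ R ∈ F.filter (fun R => Q.toSet ⊆ R.toSet), A R * t R ^ (p - 2) := by
        rw [Finset.mul_sum]
        exact Finset.sum_congr rfl fun Q _ => by ring
      _ = ENNReal.ofReal (p - 1) * ∑ R ∈ F, (A R * t R ^ (p - 2)) * S R := by rw [hswap]
  set fH : DyadicCube d → ℝ≥0∞ := fun R => w R ^ ((1:ℝ)/(p-1)) * AV R with hfH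
  set gH : DyadicCube d → ℝ≥0∞ := fun R => w R ^ ((p-2)/(p-1)) * t R ^ (p - 2) with hgH
  have hexp : (1:ℝ)/(p-1) + (p-2)/(p-1) = 1 := by
    rw [← add_div, show (1:ℝ)+(p-2) = p-1 by ring, div_self hne1]
  have hfg : ∀ R ∈ F, (A R * t R ^ (p - 2)) * S R = fH R * gH R := by
    intro R _
    by_cases h0 : μ R.toSet = 0
    · rw [hS0 R h0, mul_zero, hfH]
      simp only
      rw [hwdef]
      simp only [h0, mul_zero,
        ENNReal.zero_rpow_of_pos (div_pos one_pos (by linarith) : (0:ℝ) < 1/(p-1))]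
      rw [zero_mul, zero_mul]
    · have hwsplit : w R ^ ((1:ℝ)/(p-1)) * w R ^ ((p-2)/(p-1)) = w R := by
        rw [← ENNReal.rpow_add_of_nonneg _ _
          (le_of_lt (div_pos one_pos (by linarith)))
          (div_nonneg (by linarith) (by linarith)), hexp, ENNReal.rpow_one]
      have hmul : w R * AV R = A R * S R := by
        rw [hwdef, hAVdef]
        simp only
        calc (A R * μ R.toSet) * ((μ R.toSet)⁻¹ * S R)
            = A R * ((μ R.toSet * (μ R.toSet)⁻¹) * S R) := by ring
          _ = A R * S R := by rw [ENNReal.mul_inv_cancel h0 (hmfin R), one_mul]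
      calc (A R * t R ^ (p-2)) * S R = (A R * S R) * t R ^ (p-2) := by ring
        _ = (w R * AV R) * t R ^ (p-2) := by rw [hmul]
        _ = (w R ^ ((1:ℝ)/(p-1)) * w R ^ ((p-2)/(p-1))) * AV R * t R ^ (p-2) := by
            rw [hwsplit]
        _ = fH R * gH R := by rw [hfH, hgH]; ring
  have hpq' : (p-1).HolderConjugate ((p-1)/(p-2)) := by
    rw [Real.holderConjugate_iff]
    constructor
    · linarith
    · field_simp
      ring
  have hfpow : ∀ R ∈ F, fH R ^ (p - 1) = w R * AV R ^ (p - 1) := by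
    intro R _
    rw [hfH]
    simp only
    rw [ENNReal.mul_rpow_of_ne_top
      (ENNReal.rpow_ne_top_of_nonneg (le_of_lt (div_pos one_pos (by linarith))) (hwfin R))
      (hAVfin R)]
    congr 1
    rw [← ENNReal.rpow_mul, one_div_mul_cancel hne1, ENNReal.rpow_one]
  have hgpow : ∀ R ∈ F, gH R ^ ((p-1)/(p-2)) = w R * t R ^ (p - 1) := by
    intro R _
    rw [hgH]
    simp only
    rw [ENNReal.mul_rpow_of_ne_top
      (ENNReal.rpow_ne_top_of_nonneg (div_nonneg (by linarith) (by linarith)) (hwfin R))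
      (ENNReal.rpow_ne_top_of_nonneg (by linarith) (htfin R))]
    congr 1
    · rw [← ENNReal.rpow_mul]
      have he : (p-2)/(p-1) * ((p-1)/(p-2)) = 1 := by field_simp
      rw [he, ENNReal.rpow_one]
    · rw [← ENNReal.rpow_mul]
      have he : (p-2) * ((p-1)/(p-2)) = p - 1 := by field_simp
      rw [he]
  have hHo := ENNReal.inner_le_Lp_mul_Lq (s := F) fH gH hpq'
  rw [Finset.sum_congr rfl hfpow, Finset.sum_congr rfl hgpow,
    ← Finset.sum_congr rfl hfg] at hHo
  have hexp2 : (1:ℝ)/((p-1)/(p-2)) = (p-2)/(p-1) := one_div_div _ _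
  rw [hexp2] at hHo
  have hDfin : D ≠ ∞ := (ENNReal.sum_lt_top.2 fun Q _ => ENNReal.mul_lt_top
    (hwfin Q).lt_top (ENNReal.rpow_lt_top_of_nonneg (by linarith) (htfin Q))).ne
  have hDSig : D ≤ ENNReal.ofReal (p-1) ^ (p-1) * Sig := by
    by_cases hD0 : D = 0
    · rw [hD0]; exact zero_le
    · have hkey : D ≤ (ENNReal.ofReal (p-1) * Sig ^ ((1:ℝ)/(p-1))) * D ^ ((p-2)/(p-1)) := by
        calc D ≤ ENNReal.ofReal (p-1) * ∑ R ∈ F, (A R * t R ^ (p-2)) * S R := hD1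
          _ ≤ ENNReal.ofReal (p-1) * (Sig ^ ((1:ℝ)/(p-1)) * D ^ ((p-2)/(p-1))) :=
              mul_le_mul_right hHo _
          _ = _ := by rw [← mul_assoc]
      have hsplitD : D ^ ((1:ℝ)/(p-1)) * D ^ ((p-2)/(p-1)) = D := by
        rw [← ENNReal.rpow_add_of_nonneg _ _
          (le_of_lt (div_pos one_pos (by linarith)))
          (div_nonneg (by linarith) (by linarith)), hexp, ENNReal.rpow_one]
      have hc0 : D ^ ((p-2)/(p-1)) ≠ 0 := by
        intro h
        rcases ENNReal.rpow_eq_zero_iff.1 h with ⟨h1, _⟩ | ⟨h1, _⟩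
        · exact hD0 h1
        · exact hDfin h1
      have hcinf : D ^ ((p-2)/(p-1)) ≠ ∞ :=
        ENNReal.rpow_ne_top_of_nonneg (div_nonneg (by linarith) (by linarith)) hDfin
      have hcancel : D ^ ((1:ℝ)/(p-1)) ≤ ENNReal.ofReal (p-1) * Sig ^ ((1:ℝ)/(p-1)) :=
        (ENNReal.mul_le_mul_iff_left hc0 hcinf).1 (le_trans (le_of_eq hsplitD) hkey)
      have hfinal := ENNReal.rpow_le_rpow hcancel (by linarith : (0:ℝ) ≤ p - 1)
      rw [← ENNReal.rpow_mul, one_div_mul_cancel hne1, ENNReal.rpow_one] at hfinal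
      rw [ENNReal.mul_rpow_of_nonneg _ _ (by linarith : (0:ℝ) ≤ p-1)] at hfinal
      rw [← ENNReal.rpow_mul Sig, one_div_mul_cancel hne1, ENNReal.rpow_one] at hfinal
      exact hfinal
  calc ∫⁻ x, (∑ Q ∈ F, Q.toSet.indicator (fun _ => A Q) x) ^ p ∂μ
      ≤ ENNReal.ofReal p * D := hint
    _ ≤ ENNReal.ofReal p * (ENNReal.ofReal (p-1) ^ (p-1) * Sig) := mul_le_mul_right hDSig _
    _ = (ENNReal.ofReal p * ENNReal.ofReal (p - 1) ^ (p - 1)) * Sig := by rw [mul_assoc]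
    _ = _ := by rw [hSig]


lemma lower (μ : Measure (Fin d → ℝ)) {p : ℝ} (hp : 1 < p)
    (F : Finset (DyadicCube d)) (hne : F.Nonempty) (A : DyadicCube d → ℝ≥0∞)
    (hAfin : ∀ Q, A Q ≠ ∞) (hmfin : ∀ Q : DyadicCube d, μ Q.toSet ≠ ∞) :
    ∑ Q ∈ F, (A Q * μ Q.toSet) *
        ((μ Q.toSet)⁻¹ *
          ∑ R ∈ F.filter (fun R => R.toSet ⊆ Q.toSet), A R * μ R.toSet) ^ (p - 1)
      ≤ (ENNReal.ofReal (2 + (p-1)⁻¹)) ^ (p - 1) *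
        ∫⁻ x, (∑ Q ∈ F, Q.toSet.indicator (fun _ => A Q) x) ^ p ∂μ := by
  set f : (Fin d → ℝ) → ℝ≥0∞ := fun x => ∑ Q ∈ F, Q.toSet.indicator (fun _ => A Q) x
    with hfdef
  have hfmeas : Measurable f := Finset.measurable_sum _
    (fun Q _ => measurable_const.indicator Q.measurableSet_toSet)
  set S : DyadicCube d → ℝ≥0∞ :=
    fun Q => ∑ R ∈ F.filter (fun R => R.toSet ⊆ Q.toSet), A R * μ R.toSet with hSdef
  set I : DyadicCube d → ℝ≥0∞ := fun Q => ∫⁻ x in Q.toSet, f x ∂μ with hIdef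
  set avg : DyadicCube d → ℝ≥0∞ := fun Q => (μ Q.toSet)⁻¹ * I Q with havgdef
  have hsumA : (∑ Q ∈ F, A Q) ≠ ∞ :=
    (ENNReal.sum_lt_top.2 fun Q _ => (hAfin Q).lt_top).ne
  have hf_le : ∀ x, f x ≤ ∑ Q ∈ F, A Q := fun x =>
    Finset.sum_le_sum fun Q _ => Set.indicator_le_self _ _ x
  have hIfin : ∀ Q, I Q ≠ ∞ := by
    intro Q
    have hle : I Q ≤ (∑ Q ∈ F, A Q) * μ Q.toSet := by
      rw [hIdef]
      simp only
      calc ∫⁻ x in Q.toSet, f x ∂μ ≤ ∫⁻ _ in Q.toSet, (∑ Q ∈ F, A Q) ∂μ :=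
            lintegral_mono fun x => hf_le x
        _ = (∑ Q ∈ F, A Q) * μ Q.toSet := setLIntegral_const _ _
    exact ne_top_of_le_ne_top (ENNReal.mul_ne_top hsumA (hmfin Q)) hle
  have havgfin : ∀ Q, avg Q ≠ ∞ := by
    intro Q
    by_cases h0 : μ Q.toSet = 0
    · have hI0 : I Q = 0 := by
        rw [hIdef]
        simp only
        rw [Measure.restrict_eq_zero.2 h0, lintegral_zero_measure]
      rw [havgdef]
      simp only [hI0, mul_zero]
      exact ENNReal.zero_ne_top
    · exact ENNReal.mul_ne_top (ENNReal.inv_ne_top.2 h0) (hIfin Q)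
  set V : Finset ℝ≥0∞ := F.image avg with hVdef
  have hVfin : ∀ v ∈ V, v ≠ ∞ := by
    intro v hv
    obtain ⟨Q, _, rfl⟩ := Finset.mem_image.1 hv
    exact havgfin Q
  set Mf : (Fin d → ℝ) → ℝ≥0∞ :=
    fun x => F.sup (fun Q => Q.toSet.indicator (fun _ => avg Q) x) with hMf
  have hMfmeas : Measurable Mf := measurable_finset_sup F _
    (fun Q _ => measurable_const.indicator Q.measurableSet_toSet)
  have hMf_ge : ∀ Q ∈ F, ∀ x ∈ Q.toSet, avg Q ≤ Mf x := by
    intro Q hQ x hx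
    have h := Finset.le_sup (f := fun Q => Q.toSet.indicator (fun _ => avg Q) x) hQ
    simpa only [Set.indicator_of_mem hx] using h
  have hMf_att : ∀ x, Mf x ≠ 0 → ∃ Q ∈ F, x ∈ Q.toSet ∧ Mf x = avg Q := by
    intro x hx0
    obtain ⟨Q, hQ, hQeq⟩ := Finset.exists_mem_eq_sup F hne
      (fun Q => Q.toSet.indicator (fun _ => avg Q) x)
    by_cases hxQ : x ∈ Q.toSet
    · refine ⟨Q, hQ, hxQ, ?_⟩
      rw [hMf]
      simp only
      rw [hQeq, Set.indicator_of_mem hxQ]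
    · exfalso
      apply hx0
      rw [hMf]
      simp only
      rw [hQeq, Set.indicator_of_notMem hxQ]
  set Om : ℝ≥0∞ → Set (Fin d → ℝ) :=
    fun v => ⋃ Q ∈ F.filter (fun Q => v ≤ avg Q), Q.toSet with hOm
  have hOmeas : ∀ v, MeasurableSet (Om v) := fun v =>
    Finset.measurableSet_biUnion _ (fun Q _ => Q.measurableSet_toSet)
  have hmemOm : ∀ v x, x ∈ Om v ↔ ∃ Q ∈ F, v ≤ avg Q ∧ x ∈ Q.toSet := by
    intro v x
    rw [hOm]
    simp only [Set.mem_iUnion, exists_prop, Finset.mem_filter]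
    constructor
    · rintro ⟨Q, ⟨hQ, hv⟩, hx⟩
      exact ⟨Q, hQ, hv, hx⟩
    · rintro ⟨Q, hQ, hv, hx⟩
      exact ⟨Q, ⟨hQ, hv⟩, hx⟩
  have hOm_iff : ∀ v, v ≠ 0 → ∀ x, (x ∈ Om v ↔ v ≤ Mf x) := by
    intro v hv x
    rw [hmemOm]
    constructor
    · rintro ⟨Q, hQ, hvQ, hx⟩
      exact hvQ.trans (hMf_ge Q hQ x hx)
    · intro hvM
      have hM0 : Mf x ≠ 0 := fun h => hv (le_antisymm (h ▸ hvM) (zero_le))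
      obtain ⟨Q, hQ, hx, heq⟩ := hMf_att x hM0
      exact ⟨Q, hQ, heq ▸ hvM, hx⟩
  have hweak : ∀ v : ℝ≥0∞, v * μ (Om v) ≤ ∫⁻ x in Om v, f x ∂μ := by
    intro v
    rw [hOm]
    simp only
    refine claimA μ f v (F.filter (fun Q => v ≤ avg Q)) ?_
    intro Q hQ
    obtain ⟨hQF, hvQ⟩ := Finset.mem_filter.1 hQ
    by_cases h0 : μ Q.toSet = 0
    · rw [h0, mul_zero]
      exact zero_le
    · calc v * μ Q.toSet ≤ avg Q * μ Q.toSet := mul_le_mul_left hvQ _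
        _ = I Q * ((μ Q.toSet)⁻¹ * μ Q.toSet) := by rw [havgdef]; ring
        _ = I Q := by rw [ENNReal.inv_mul_cancel h0 (hmfin Q), mul_one]
  set BQ : DyadicCube d → ℝ≥0∞ :=
    fun Q => (F.filter (fun R => Q.toSet ⊆ R.toSet)).sup avg with hBQ
  have hBQ_att : ∀ Q ∈ F, ∃ R ∈ F, Q.toSet ⊆ R.toSet ∧ BQ Q = avg R := by
    intro Q hQ
    have hne' : (F.filter (fun R => Q.toSet ⊆ R.toSet)).Nonempty :=
      ⟨Q, Finset.mem_filter.2 ⟨hQ, subset_rfl⟩⟩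
    obtain ⟨R, hR, hReq⟩ := Finset.exists_mem_eq_sup _ hne' avg
    obtain ⟨hRF, hQR⟩ := Finset.mem_filter.1 hR
    exact ⟨R, hRF, hQR, hReq⟩
  have hBQV : ∀ Q ∈ F, BQ Q ∈ V := by
    intro Q hQ
    obtain ⟨R, hRF, _, heq⟩ := hBQ_att Q hQ
    rw [hVdef, heq]
    exact Finset.mem_image_of_mem avg hRF
  have havg_le_BQ : ∀ Q ∈ F, avg Q ≤ BQ Q := fun Q hQ =>
    Finset.le_sup (Finset.mem_filter.2 ⟨hQ, subset_rfl⟩)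
  have hclaimB : ∀ v : ℝ≥0∞, ∑ Q ∈ F.filter (fun Q => v ≤ BQ Q), A Q * μ Q.toSet
      ≤ ∫⁻ x in Om v, f x ∂μ := by
    intro v
    refine sum_le_setLIntegral μ _ A f (hOmeas v) ?_ ?_
    · intro Q hQ
      obtain ⟨hQF, hvB⟩ := Finset.mem_filter.1 hQ
      obtain ⟨R, hRF, hQR, heq⟩ := hBQ_att Q hQF
      intro x hx
      rw [hmemOm]
      exact ⟨R, hRF, heq ▸ hvB, hQR hx⟩
    · intro x
      rw [hfdef]
      exact Finset.sum_le_sum_of_subset (Finset.filter_subset _ _)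
  have hSI : ∀ Q ∈ F, S Q ≤ I Q := by
    intro Q hQ
    rw [hSdef, hIdef]
    simp only
    refine sum_le_setLIntegral μ _ A f Q.measurableSet_toSet
      (fun R hR => (Finset.mem_filter.1 hR).2) ?_
    intro x
    rw [hfdef]
    exact Finset.sum_le_sum_of_subset (Finset.filter_subset _ _)
  set T : ℝ≥0∞ := ∑ Q ∈ F, (A Q * μ Q.toSet) * BQ Q ^ (p-1) with hT
  have hSigT : (∑ Q ∈ F, (A Q * μ Q.toSet) * ((μ Q.toSet)⁻¹ * S Q) ^ (p-1)) ≤ T := by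
    rw [hT]
    refine Finset.sum_le_sum fun Q hQ =>
      mul_le_mul_right (ENNReal.rpow_le_rpow ?_ (by linarith)) _
    calc (μ Q.toSet)⁻¹ * S Q ≤ (μ Q.toSet)⁻¹ * I Q := mul_le_mul_right (hSI Q hQ) _
      _ = avg Q := by rw [havgdef]
      _ ≤ BQ Q := havg_le_BQ Q hQ
  have hmono1 : Monotone (fun y : ℝ≥0∞ => y ^ (p-1)) :=
    fun a b h => ENNReal.rpow_le_rpow h (by linarith)
  have hzero1 : (fun y : ℝ≥0∞ => y ^ (p-1)) 0 = 0 := ENNReal.zero_rpow_of_pos (by linarith)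
  have hmono2 : Monotone (fun y : ℝ≥0∞ => y ^ p) :=
    fun a b h => ENNReal.rpow_le_rpow h (by linarith)
  have hzero2 : (fun y : ℝ≥0∞ => y ^ p) 0 = 0 := ENNReal.zero_rpow_of_pos (by linarith)
  have hV1fin : ∀ v ∈ V, (fun y : ℝ≥0∞ => y ^ (p-1)) v ≠ ∞ := fun v hv =>
    ENNReal.rpow_ne_top_of_nonneg (by linarith) (hVfin v hv)
  have hV2fin : ∀ v ∈ V, (fun y : ℝ≥0∞ => y ^ p) v ≠ ∞ := fun v hv =>
    ENNReal.rpow_ne_top_of_nonneg (by linarith) (hVfin v hv)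
  have hind : ∀ g : ℝ≥0∞ → ℝ≥0∞, g 0 = 0 → ∀ v, v ∈ V → ∀ x : Fin d → ℝ,
      (Om v).indicator (fun _ => g v - g (prevE V v)) x
        = if v ≤ Mf x then g v - g (prevE V v) else 0 := by
    intro g hg0 v _ x
    by_cases hv0 : v = 0
    · have hp0 : prevE V v = 0 := le_antisymm (hv0 ▸ prevE_le V v) (zero_le)
      have hzz : g v - g (prevE V v) = 0 := by
        rw [hp0, hv0, hg0, tsub_zero]
      rw [hzz]
      simp [Set.indicator_apply]
    · by_cases hmem : x ∈ Om v
      · rw [Set.indicator_of_mem hmem, if_pos ((hOm_iff v hv0 x).1 hmem)]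
      · rw [Set.indicator_of_notMem hmem,
          if_neg (fun h => hmem ((hOm_iff v hv0 x).2 h))]
  have hsum_ind : ∀ g : ℝ≥0∞ → ℝ≥0∞, g 0 = 0 → ∀ x : Fin d → ℝ,
      ∑ v ∈ V, (Om v).indicator (fun _ => g v - g (prevE V v)) x
        = ∑ v ∈ V.filter (fun w => w ≤ Mf x), (g v - g (prevE V v)) := by
    intro g hg0 x
    rw [Finset.sum_filter]
    exact Finset.sum_congr rfl fun v hv => hind g hg0 v hv x
  have hmid : ∑ v ∈ V, (v ^ (p-1) - (prevE V v) ^ (p-1)) * ∫⁻ x in Om v, f x ∂μ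
      = ∫⁻ x, f x *
          (∑ v ∈ V, (Om v).indicator (fun _ => v ^ (p-1) - (prevE V v) ^ (p-1)) x) ∂μ := by
    have e1 : ∀ v ∈ V, (v ^ (p-1) - (prevE V v) ^ (p-1)) * ∫⁻ x in Om v, f x ∂μ
        = ∫⁻ x, f x * (Om v).indicator (fun _ => v ^ (p-1) - (prevE V v) ^ (p-1)) x ∂μ := by
      intro v _
      rw [← lintegral_indicator (hOmeas v),
        ← lintegral_const_mul _ (hfmeas.indicator (hOmeas v))]
      refine lintegral_congr fun x => ?_
      by_cases hx : x ∈ Om v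
      · rw [Set.indicator_of_mem hx, Set.indicator_of_mem hx, mul_comm]
      · rw [Set.indicator_of_notMem hx, Set.indicator_of_notMem hx, mul_zero, mul_zero]
    rw [Finset.sum_congr rfl e1, ← lintegral_finset_sum]
    · refine lintegral_congr fun x => ?_
      rw [Finset.mul_sum]
    · exact fun v _ => hfmeas.mul (measurable_const.indicator (hOmeas v))
  have hT_le : T ≤ ∑ v ∈ V, (v ^ (p-1) - (prevE V v) ^ (p-1)) * ∫⁻ x in Om v, f x ∂μ := by
    have e1 : ∀ Q ∈ F, (A Q * μ Q.toSet) * BQ Q ^ (p-1)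
        = ∑ v ∈ V, if v ≤ BQ Q then
            (A Q * μ Q.toSet) * (v ^ (p-1) - (prevE V v) ^ (p-1)) else 0 := by
      intro Q hQ
      rw [← tele (fun y => y ^ (p-1)) hmono1 hzero1 V hV1fin (BQ Q) (hBQV Q hQ),
        Finset.mul_sum, Finset.sum_filter]
    rw [hT, Finset.sum_congr rfl e1, Finset.sum_comm]
    refine Finset.sum_le_sum fun v hv => ?_
    rw [← Finset.sum_filter, ← Finset.sum_mul, mul_comm]
    exact mul_le_mul_right (hclaimB v) _
  have hchi : ∀ x, (∑ v ∈ V, (Om v).indicator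
        (fun _ => v ^ (p-1) - (prevE V v) ^ (p-1)) x) ≤ Mf x ^ (p-1) := by
    intro x
    rw [hsum_ind _ hzero1 x]
    exact tele_le (fun y => y ^ (p-1)) hmono1 hzero1 V hV1fin (Mf x)
  have hT2 : T ≤ ∫⁻ x, f x * Mf x ^ (p-1) ∂μ := by
    refine (hT_le.trans (le_of_eq hmid)).trans ?_
    exact lintegral_mono fun x => mul_le_mul_right (hchi x) _
  set X : ℝ≥0∞ := ∫⁻ x, Mf x ^ p ∂μ with hX
  have hXpt : ∀ x, Mf x ^ p
      = ∑ v ∈ V.filter (fun w => w ≤ Mf x), (v ^ p - (prevE V v) ^ p) := by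
    intro x
    by_cases hM0 : Mf x = 0
    · rw [hM0, ENNReal.zero_rpow_of_pos (by linarith)]
      symm
      refine Finset.sum_eq_zero fun v hv => ?_
      obtain ⟨hvV, hvle⟩ := Finset.mem_filter.1 hv
      have hv0 : v = 0 := le_antisymm (hM0 ▸ hvle) (zero_le)
      have hp0 : prevE V v = 0 := le_antisymm (hv0 ▸ prevE_le V v) (zero_le)
      rw [hp0, hv0, tsub_self]
    · obtain ⟨Q, hQ, hx, heq⟩ := hMf_att x hM0
      have hMV : Mf x ∈ V := by
        rw [hVdef, heq]
        exact Finset.mem_image_of_mem avg hQ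
      exact (tele (fun y => y ^ p) hmono2 hzero2 V hV2fin (Mf x) hMV).symm
  have hXsum : X = ∑ v ∈ V, (v ^ p - (prevE V v) ^ p) * μ (Om v) := by
    rw [hX]
    have hpt : ∀ x, Mf x ^ p
        = ∑ v ∈ V, (Om v).indicator (fun _ => v ^ p - (prevE V v) ^ p) x :=
      fun x => by rw [hsum_ind _ hzero2 x, hXpt x]
    rw [lintegral_congr hpt,
      lintegral_finset_sum _ (fun v _ => measurable_const.indicator (hOmeas v))]
    exact Finset.sum_congr rfl fun v hv => lintegral_indicator_const (hOmeas v) _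
  have hXle : X ≤ ENNReal.ofReal (2 + (p-1)⁻¹) *
      ∑ v ∈ V, (v ^ (p-1) - (prevE V v) ^ (p-1)) * ∫⁻ x in Om v, f x ∂μ := by
    rw [hXsum, Finset.mul_sum]
    refine Finset.sum_le_sum fun v hv => ?_
    have hdoob := ennreal_doob (ν := prevE V v) (lam := v) hp (prevE_le V v) (hVfin v hv)
    calc (v ^ p - (prevE V v) ^ p) * μ (Om v)
        ≤ (ENNReal.ofReal (2 + (p-1)⁻¹) * v * (v ^ (p-1) - (prevE V v) ^ (p-1))) * μ (Om v) :=
          mul_le_mul_left hdoob _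
      _ = ENNReal.ofReal (2 + (p-1)⁻¹) *
            ((v ^ (p-1) - (prevE V v) ^ (p-1)) * (v * μ (Om v))) := by ring
      _ ≤ ENNReal.ofReal (2 + (p-1)⁻¹) *
            ((v ^ (p-1) - (prevE V v) ^ (p-1)) * ∫⁻ x in Om v, f x ∂μ) :=
          mul_le_mul_right (mul_le_mul_right (hweak v) _) _
  have hX2 : X ≤ ENNReal.ofReal (2 + (p-1)⁻¹) * ∫⁻ x, f x * Mf x ^ (p-1) ∂μ := by
    refine hXle.trans (mul_le_mul_right ?_ _)
    refine (le_of_eq hmid).trans ?_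
    exact lintegral_mono fun x => mul_le_mul_right (hchi x) _
  have hpq2 : p.HolderConjugate (p/(p-1)) := Real.HolderConjugate.conjExponent hp
  have hHold := ENNReal.lintegral_mul_le_Lp_mul_Lq μ hpq2 hfmeas.aemeasurable
    ((hMfmeas.pow_const (p-1)).aemeasurable)
  have hid : ∀ x : Fin d → ℝ, ((Mf x ^ (p-1)) ^ (p/(p-1)) : ℝ≥0∞) = Mf x ^ p := by
    intro x
    rw [← ENNReal.rpow_mul]
    congr 1
    rw [mul_comm]
    exact div_mul_cancel₀ p (by linarith)
  set Y : ℝ≥0∞ := (∫⁻ x, f x ^ p ∂μ) ^ ((1:ℝ)/p) with hY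
  have hexp3 : (1:ℝ)/(p/(p-1)) = (p-1)/p := one_div_div _ _
  have hHold2 : ∫⁻ x, f x * Mf x ^ (p-1) ∂μ ≤ Y * X ^ ((p-1)/p) := by
    calc ∫⁻ x, f x * Mf x ^ (p-1) ∂μ
        = ∫⁻ x, (f * fun x => Mf x ^ (p-1)) x ∂μ := lintegral_congr fun x => rfl
      _ ≤ (∫⁻ x, f x ^ p ∂μ) ^ ((1:ℝ)/p) *
          (∫⁻ x, (Mf x ^ (p-1)) ^ (p/(p-1)) ∂μ) ^ ((1:ℝ)/(p/(p-1))) := hHold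
      _ = Y * X ^ ((p-1)/p) := by
          rw [hY, hexp3, hX, lintegral_congr hid]
  set U : Set (Fin d → ℝ) := ⋃ Q ∈ F, Q.toSet with hU
  have hUmeas : MeasurableSet U := Finset.measurableSet_biUnion _ fun Q _ =>
    Q.measurableSet_toSet
  have hUfin : μ U ≠ ∞ := ne_top_of_le_ne_top
    ((ENNReal.sum_lt_top.2 fun Q _ => (hmfin Q).lt_top).ne)
    (measure_biUnion_finset_le F _)
  set KB : ℝ≥0∞ := F.sup avg with hKB
  have hKBfin : KB ≠ ∞ := by
    rw [hKB]
    exact ((Finset.sup_lt_iff (by simp : (⊥:ℝ≥0∞) < ⊤)).2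
      fun Q _ => (havgfin Q).lt_top).ne
  have hMf_le : ∀ x, Mf x ≤ KB := by
    intro x
    rw [hMf, hKB]
    refine Finset.sup_mono_fun fun Q _ => ?_
    by_cases h : x ∈ Q.toSet
    · rw [Set.indicator_of_mem h]
    · rw [Set.indicator_of_notMem h]
      exact zero_le
  have hMsupp : ∀ x, x ∉ U → Mf x = 0 := by
    intro x hx
    rw [hMf]
    refine le_antisymm (Finset.sup_le fun Q hQ => ?_) (zero_le)
    rw [Set.indicator_of_notMem (fun hxQ => hx (by
      rw [hU]; exact Set.mem_biUnion hQ hxQ))]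
  have hXfin : X ≠ ∞ := by
    have hb : ∀ x, Mf x ^ p ≤ U.indicator (fun _ => KB ^ p) x := by
      intro x
      by_cases hx : x ∈ U
      · rw [Set.indicator_of_mem hx]
        exact ENNReal.rpow_le_rpow (hMf_le x) (by linarith)
      · rw [Set.indicator_of_notMem hx, hMsupp x hx,
          ENNReal.zero_rpow_of_pos (by linarith)]
    refine ne_top_of_le_ne_top ?_
      ((lintegral_mono hb).trans_eq (lintegral_indicator_const hUmeas _))
    exact ENNReal.mul_ne_top (ENNReal.rpow_ne_top_of_nonneg (by linarith) hKBfin) hUfin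
  have hfinal : T ≤ (ENNReal.ofReal (2 + (p-1)⁻¹)) ^ (p-1) * ∫⁻ x, f x ^ p ∂μ := by
    by_cases hX0 : X = 0
    · refine le_trans (hT2.trans hHold2) ?_
      rw [hX0, ENNReal.zero_rpow_of_pos (div_pos (by linarith) (by linarith)), mul_zero]
      exact zero_le
    · have hc0 : X ^ ((p-1)/p) ≠ 0 := by
        intro h
        rcases ENNReal.rpow_eq_zero_iff.1 h with ⟨h1, _⟩ | ⟨h1, _⟩
        · exact hX0 h1
        · exact hXfin h1
      have hcinf : X ^ ((p-1)/p) ≠ ∞ :=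
        ENNReal.rpow_ne_top_of_nonneg (div_nonneg (by linarith) (by linarith)) hXfin
      have hsplit : X ^ ((1:ℝ)/p) * X ^ ((p-1)/p) = X := by
        rw [← ENNReal.rpow_add_of_nonneg _ _
          (le_of_lt (div_pos one_pos (by linarith)))
          (div_nonneg (by linarith) (by linarith)),
          ← add_div, show (1:ℝ)+(p-1) = p by ring, div_self (by linarith : p ≠ 0),
          ENNReal.rpow_one]
      have hdoob2 : X ≤ (ENNReal.ofReal (2 + (p-1)⁻¹) * Y) * X ^ ((p-1)/p) := by
        calc X ≤ ENNReal.ofReal (2 + (p-1)⁻¹) * ∫⁻ x, f x * Mf x ^ (p-1) ∂μ := hX2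
          _ ≤ ENNReal.ofReal (2 + (p-1)⁻¹) * (Y * X ^ ((p-1)/p)) :=
              mul_le_mul_right hHold2 _
          _ = _ := by rw [mul_assoc]
      have hcancel : X ^ ((1:ℝ)/p) ≤ ENNReal.ofReal (2 + (p-1)⁻¹) * Y :=
        (ENNReal.mul_le_mul_iff_left hc0 hcinf).1 (le_trans (le_of_eq hsplit) hdoob2)
      calc T ≤ Y * X ^ ((p-1)/p) := hT2.trans hHold2
        _ = Y * (X ^ ((1:ℝ)/p)) ^ (p-1) := by
            rw [← ENNReal.rpow_mul]
            congr 2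
            ring
        _ ≤ Y * (ENNReal.ofReal (2 + (p-1)⁻¹) * Y) ^ (p-1) :=
            mul_le_mul_right (ENNReal.rpow_le_rpow hcancel (by linarith)) _
        _ = (ENNReal.ofReal (2 + (p-1)⁻¹)) ^ (p-1) * (Y * Y ^ (p-1)) := by
            rw [ENNReal.mul_rpow_of_nonneg _ _ (by linarith : (0:ℝ) ≤ p-1)]
            ring
        _ = (ENNReal.ofReal (2 + (p-1)⁻¹)) ^ (p-1) * ∫⁻ x, f x ^ p ∂μ := by
            congr 1
            have h1 : Y * Y ^ (p-1) = Y ^ (1 + (p-1)) := by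
              rw [ENNReal.rpow_add_of_nonneg _ _ (by norm_num : (0:ℝ) ≤ 1)
                (by linarith : (0:ℝ) ≤ p-1), ENNReal.rpow_one]
            rw [h1, show (1:ℝ) + (p-1) = p by ring, hY, ← ENNReal.rpow_mul,
              one_div_mul_cancel (by linarith : p ≠ 0), ENNReal.rpow_one]
  exact hSigT.trans hfinal


end StmtAux

open StmtAux in
/-- `∫ (∑_Q a_Q 1_Q)^p dμ ≍_p ∑_Q a_Q μ(Q) ((1/μ(Q)) ∑_{R ⊆ Q} a_R μ(R))^(p-1)`. -/
theorem stmt2 (p : ℝ) (hp : 1 < p) :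
    ∃ c C : ℝ≥0∞, 0 < c ∧ C < ∞ ∧
      ∀ (d : ℕ) (μ : Measure (Fin d → ℝ)), IsLocallyFiniteMeasure μ →
        ∀ (a : DyadicCube d → ℝ≥0), (Function.support a).Finite →
          (c * ∑' Q : DyadicCube d,
              (a Q : ℝ≥0∞) * μ Q.toSet *
                ((μ Q.toSet)⁻¹ * ∑' R : {R : DyadicCube d // R.toSet ⊆ Q.toSet},
                    (a R.1 : ℝ≥0∞) * μ R.1.toSet) ^ (p - 1)
            ≤ ∫⁻ x, (∑' Q : DyadicCube d,
                Q.toSet.indicator (fun _ => (a Q : ℝ≥0∞)) x) ^ p ∂μ) ∧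
          (∫⁻ x, (∑' Q : DyadicCube d,
                Q.toSet.indicator (fun _ => (a Q : ℝ≥0∞)) x) ^ p ∂μ
            ≤ C * ∑' Q : DyadicCube d,
              (a Q : ℝ≥0∞) * μ Q.toSet *
                ((μ Q.toSet)⁻¹ * ∑' R : {R : DyadicCube d // R.toSet ⊆ Q.toSet},
                    (a R.1 : ℝ≥0∞) * μ R.1.toSet) ^ (p - 1)) := by
  classical
  have hp1 : (0:ℝ) < p - 1 := by linarith
  refine ⟨((ENNReal.ofReal (2 + (p-1)⁻¹)) ^ (p-1))⁻¹,
    ENNReal.ofReal p * (1 + ENNReal.ofReal (p-1) ^ (p-1)), ?_, ?_, ?_⟩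
  · rw [ENNReal.inv_pos]
    exact ENNReal.rpow_ne_top_of_nonneg (by linarith) ENNReal.ofReal_ne_top
  · exact ENNReal.mul_lt_top ENNReal.ofReal_lt_top (ENNReal.add_lt_top.2
      ⟨ENNReal.one_lt_top, ENNReal.rpow_lt_top_of_nonneg (by linarith)
        ENNReal.ofReal_ne_top⟩)
  intro d μ hloc a ha
  haveI := hloc
  set F : Finset (DyadicCube d) := ha.toFinset with hF
  have hA0 : ∀ Q ∉ F, ((a Q : ℝ≥0∞)) = 0 := by
    intro Q hQ
    have h0 : a Q = 0 := by
      by_contra h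
      exact hQ (ha.mem_toFinset.2 h)
    rw [h0, ENNReal.coe_zero]
  have hAfin : ∀ Q : DyadicCube d, ((a Q : ℝ≥0∞)) ≠ ∞ := fun Q => ENNReal.coe_ne_top
  have hmfin : ∀ Q : DyadicCube d, μ Q.toSet ≠ ∞ := fun Q =>
    (DyadicCube.measure_toSet_lt_top μ Q).ne
  have hfx : ∀ x : Fin d → ℝ,
      (∑' Q : DyadicCube d, Q.toSet.indicator (fun _ => (a Q : ℝ≥0∞)) x)
        = ∑ Q ∈ F, Q.toSet.indicator (fun _ => (a Q : ℝ≥0∞)) x := by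
    intro x
    refine tsum_eq_sum ?_
    intro Q hQ
    rw [Set.indicator_apply]
    split_ifs with h
    · exact hA0 Q hQ
    · rfl
  have hint_eq : (∫⁻ x, (∑' Q : DyadicCube d,
        Q.toSet.indicator (fun _ => (a Q : ℝ≥0∞)) x) ^ p ∂μ)
      = ∫⁻ x, (∑ Q ∈ F, Q.toSet.indicator (fun _ => (a Q : ℝ≥0∞)) x) ^ p ∂μ :=
    lintegral_congr fun x => by rw [hfx x]
  have hinner : ∀ Q : DyadicCube d,
      (∑' R : {R : DyadicCube d // R.toSet ⊆ Q.toSet}, (a R.1 : ℝ≥0∞) * μ R.1.toSet)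
        = ∑ R ∈ F.filter (fun R => R.toSet ⊆ Q.toSet), (a R : ℝ≥0∞) * μ R.toSet := by
    intro Q
    have h1 : (∑' R : {R : DyadicCube d // R.toSet ⊆ Q.toSet},
        (a R.1 : ℝ≥0∞) * μ R.1.toSet)
        = ∑' R : DyadicCube d, ({R : DyadicCube d | R.toSet ⊆ Q.toSet}).indicator
            (fun R => (a R : ℝ≥0∞) * μ R.toSet) R :=
      tsum_subtype {R : DyadicCube d | R.toSet ⊆ Q.toSet}
        (fun R => (a R : ℝ≥0∞) * μ R.toSet)
    rw [h1]
    rw [tsum_eq_sum (s := F) ?_]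
    · rw [Finset.sum_filter]
      refine Finset.sum_congr rfl fun R _ => ?_
      by_cases h : R ∈ {R : DyadicCube d | R.toSet ⊆ Q.toSet}
      · rw [Set.indicator_of_mem h]
        exact (if_pos (show R.toSet ⊆ Q.toSet from h)).symm
      · rw [Set.indicator_of_notMem h]
        exact (if_neg (show ¬ R.toSet ⊆ Q.toSet from h)).symm
    · intro R hR
      rw [Set.indicator_apply]
      split_ifs with h
      · rw [hA0 R hR, zero_mul]
      · rfl
  have hRHS_eq : (∑' Q : DyadicCube d, (a Q : ℝ≥0∞) * μ Q.toSet *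
        ((μ Q.toSet)⁻¹ * ∑' R : {R : DyadicCube d // R.toSet ⊆ Q.toSet},
          (a R.1 : ℝ≥0∞) * μ R.1.toSet) ^ (p - 1))
      = ∑ Q ∈ F, ((a Q : ℝ≥0∞) * μ Q.toSet) *
          ((μ Q.toSet)⁻¹ * ∑ R ∈ F.filter (fun R => R.toSet ⊆ Q.toSet),
            (a R : ℝ≥0∞) * μ R.toSet) ^ (p - 1) := by
    rw [tsum_eq_sum (s := F) ?_]
    · exact Finset.sum_congr rfl fun Q _ => by rw [hinner Q]
    · intro Q hQ
      rw [hA0 Q hQ, zero_mul, zero_mul]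
  constructor
  · rw [hint_eq, hRHS_eq]
    rcases F.eq_empty_or_nonempty with hFe | hFne
    · rw [hFe]
      simp
    · have hlow := lower μ hp F hFne (fun Q => (a Q : ℝ≥0∞)) hAfin hmfin
      set K := (ENNReal.ofReal (2 + (p-1)⁻¹)) ^ (p-1) with hK
      have hK0 : K ≠ 0 := by
        rw [hK]
        intro h
        rcases ENNReal.rpow_eq_zero_iff.1 h with ⟨h1, _⟩ | ⟨h1, _⟩
        · rw [ENNReal.ofReal_eq_zero] at h1
          have h3 : (0:ℝ) ≤ (p-1)⁻¹ := by positivity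
          linarith
        · exact absurd h1 ENNReal.ofReal_ne_top
      have hKfin : K ≠ ∞ :=
        ENNReal.rpow_ne_top_of_nonneg (by linarith) ENNReal.ofReal_ne_top
      calc K⁻¹ * (∑ Q ∈ F, ((a Q : ℝ≥0∞) * μ Q.toSet) *
              ((μ Q.toSet)⁻¹ * ∑ R ∈ F.filter (fun R => R.toSet ⊆ Q.toSet),
                (a R : ℝ≥0∞) * μ R.toSet) ^ (p - 1))
          ≤ K⁻¹ * (K * ∫⁻ x, (∑ Q ∈ F,
              Q.toSet.indicator (fun _ => (a Q : ℝ≥0∞)) x) ^ p ∂μ) :=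
            mul_le_mul_right hlow _
        _ = (K⁻¹ * K) * ∫⁻ x, (∑ Q ∈ F,
              Q.toSet.indicator (fun _ => (a Q : ℝ≥0∞)) x) ^ p ∂μ := by
            rw [mul_assoc]
        _ = ∫⁻ x, (∑ Q ∈ F, Q.toSet.indicator (fun _ => (a Q : ℝ≥0∞)) x) ^ p ∂μ := by
            rw [ENNReal.inv_mul_cancel hK0 hKfin, one_mul]
  · rw [hint_eq, hRHS_eq]
    rcases le_or_gt p 2 with hple | hpgt
    · refine (upper_small μ hp hple F _ hAfin hmfin).trans ?_
      refine mul_le_mul_left ?_ _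
      calc ENNReal.ofReal p = ENNReal.ofReal p * 1 := (mul_one _).symm
        _ ≤ ENNReal.ofReal p * (1 + ENNReal.ofReal (p-1) ^ (p-1)) :=
            mul_le_mul_right le_self_add _
    · refine (upper_big μ hpgt F _ hAfin hmfin).trans ?_
      refine mul_le_mul_left ?_ _
      exact mul_le_mul_right le_add_self _
end

section
/- Let p, q ∈ (0,∞), let σ, ω be locally finite Borel measures on ℝ^d, and let {λ_Q} be a family of non-negative reals indexed by dyadic cubes. Set ρ_Q := ∑_{R ⊆ Q} λ_R 1_R. Then the inequality ‖∑_Q λ_Q a_Q 1_Q‖_{L^q(ω)} ≤ C ‖sup_Q a_Q 1_Q‖_{L^p(σ)} holds for all non-negative families {a_Q} if and only if the inequality ‖∑_Q ρ_Q b_Q 1_Q‖_{L^q(ω)} ≤ C ‖∑_Q b_Q 1_Q‖_{L^p(σ)} holds for all non-negative families {b_Q}, with the same constant C. -/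
open MeasureTheory ENNReal Filter
open scoped NNReal ENNReal

namespace Stmt6Aux

variable {d : ℕ}

noncomputable def cubeAt (k : ℤ) (x : Fin d → ℝ) : DyadicCube d :=
  ⟨k, fun i => ⌊x i / 2 ^ k⌋⟩

noncomputable def corner (Q : DyadicCube d) : Fin d → ℝ := fun i => 2 ^ Q.k * Q.j i

noncomputable def up (Q : DyadicCube d) : DyadicCube d := cubeAt (Q.k + 1) (corner Q)

lemma two_zpow_pos (k : ℤ) : (0:ℝ) < 2 ^ k := zpow_pos (by norm_num) k

lemma mem_cubeAt (k : ℤ) (x : Fin d → ℝ) : x ∈ (cubeAt k x).toSet := by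
  intro i
  have h2 := two_zpow_pos k
  constructor
  · have := Int.floor_le (x i / 2 ^ k)
    calc (2:ℝ) ^ k * ⌊x i / 2 ^ k⌋ ≤ 2 ^ k * (x i / 2 ^ k) := by
          exact mul_le_mul_of_nonneg_left this h2.le
      _ = x i := by field_simp
  · have := Int.lt_floor_add_one (x i / 2 ^ k)
    calc x i = 2 ^ k * (x i / 2 ^ k) := by field_simp
      _ < 2 ^ k * (⌊x i / 2 ^ k⌋ + 1) := by
          apply mul_lt_mul_of_pos_left _ h2
          exact_mod_cast this

lemma eq_cubeAt_of_mem {Q : DyadicCube d} {x : Fin d → ℝ} (h : x ∈ Q.toSet) :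
    Q = cubeAt Q.k x := by
  obtain ⟨k, j⟩ := Q
  simp only [cubeAt, DyadicCube.mk.injEq, true_and]
  funext i
  obtain ⟨h1, h2⟩ := h i
  have h2k := two_zpow_pos k
  symm
  rw [Int.floor_eq_iff]
  constructor
  · rw [le_div_iff₀ h2k]; linarith [h1]
  · rw [div_lt_iff₀ h2k]; push_cast at h2 ⊢; linarith [h2]

lemma corner_mem (Q : DyadicCube d) : corner Q ∈ Q.toSet := by
  intro i
  have h2k := two_zpow_pos Q.k
  refine ⟨le_refl _, ?_⟩
  apply mul_lt_mul_of_pos_left _ h2k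
  linarith [(by norm_num : (0:ℝ) < 1)]

lemma cubeAt_subset_succ (k : ℤ) (x : Fin d → ℝ) :
    (cubeAt k x).toSet ⊆ (cubeAt (k+1) x).toSet := by
  intro y hy i
  have h2k := two_zpow_pos k
  set m : ℤ := ⌊x i / 2 ^ k⌋ with hm
  set m' : ℤ := ⌊x i / 2 ^ (k+1)⌋ with hm'
  have hpow : (2:ℝ) ^ (k+1) = 2 ^ k * 2 := by
    rw [zpow_add_one₀ (by norm_num : (2:ℝ) ≠ 0)]
  have hdiv : x i / 2 ^ k = 2 * (x i / 2 ^ (k+1)) := by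
    rw [hpow]; field_simp
  have h1 : 2 * m' ≤ m := by
    rw [hm]
    apply Int.le_floor.mpr
    rw [hdiv]
    push_cast
    have := Int.floor_le (x i / 2 ^ (k+1))
    linarith
  have h2 : m ≤ 2 * m' + 1 := by
    have hlt : (m:ℝ) < 2 * m' + 2 := by
      have ha := Int.floor_le (x i / 2 ^ k)
      have hb := Int.lt_floor_add_one (x i / 2 ^ (k+1))
      rw [← hm] at ha; rw [← hm'] at hb
      rw [hdiv] at ha
      linarith
    have : m < 2 * m' + 2 := by exact_mod_cast hlt
    omega
  obtain ⟨hy1, hy2⟩ := hy i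
  simp only [cubeAt] at hy1 hy2 ⊢
  rw [← hm] at hy1 hy2
  rw [← hm']
  constructor
  · calc (2:ℝ) ^ (k+1) * m' = 2 ^ k * (2 * m') := by rw [hpow]; ring
      _ ≤ 2 ^ k * m := by
          apply mul_le_mul_of_nonneg_left _ h2k.le; exact_mod_cast h1
      _ ≤ y i := hy1
  · calc y i < 2 ^ k * (m + 1) := hy2
      _ ≤ 2 ^ (k+1) * (m' + 1) := by
          rw [hpow]
          have : (m:ℝ) + 1 ≤ 2 * (m' + 1) := by
            have : (m:ℝ) ≤ 2 * m' + 1 := by exact_mod_cast h2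
            linarith
          calc (2:ℝ) ^ k * (m + 1) ≤ 2 ^ k * (2 * (m' + 1)) :=
                mul_le_mul_of_nonneg_left this h2k.le
            _ = 2 ^ k * 2 * (m' + 1) := by ring

lemma cubeAt_mono {k l : ℤ} (h : k ≤ l) (x : Fin d → ℝ) :
    (cubeAt k x).toSet ⊆ (cubeAt l x).toSet := by
  refine Int.le_induction (motive := fun l _ => (cubeAt k x).toSet ⊆ (cubeAt l x).toSet)
    subset_rfl (fun n _ ih => ih.trans (cubeAt_subset_succ n x)) l h

lemma up_cubeAt (k : ℤ) (x : Fin d → ℝ) : up (cubeAt k x) = cubeAt (k+1) x := by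
  have h1 : corner (cubeAt k x) ∈ (cubeAt k x).toSet := corner_mem _
  have h2 : corner (cubeAt k x) ∈ (cubeAt (k+1) x).toSet := cubeAt_subset_succ k x h1
  have := eq_cubeAt_of_mem h2
  rw [up]
  exact this.symm

lemma cubeAt_k (k : ℤ) (x : Fin d → ℝ) : (cubeAt k x).k = k := rfl

lemma cubeAt_injective (x : Fin d → ℝ) : Function.Injective (fun k => cubeAt (d := d) k x) :=
  fun k l h => by
    have : (cubeAt k x).k = (cubeAt l x).k := congrArg DyadicCube.k h
    exact this

instance : Countable (DyadicCube d) := by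
  have h : Function.Injective (fun Q : DyadicCube d => (Q.k, Q.j)) := by
    intro Q R hqr
    obtain ⟨k, j⟩ := Q; obtain ⟨k', j'⟩ := R
    simpa [DyadicCube.mk.injEq] using hqr
  exact h.countable

lemma measurableSet_toSet (Q : DyadicCube d) : MeasurableSet Q.toSet := by
  have : Q.toSet = Set.univ.pi (fun i => Set.Ico ((2:ℝ) ^ Q.k * Q.j i) ((2:ℝ) ^ Q.k * (Q.j i + 1))) := by
    ext x; simp [DyadicCube.toSet, Set.mem_pi, Set.mem_Ico]
  rw [this]
  exact MeasurableSet.univ_pi fun i => measurableSet_Ico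


/-! ### Indicator machinery -/

open Classical in
noncomputable def ind (Q : DyadicCube d) (x : Fin d → ℝ) : ℝ≥0∞ :=
  if x ∈ Q.toSet then 1 else 0

lemma ind_def (Q : DyadicCube d) : ind Q = Q.toSet.indicator (fun _ => (1:ℝ≥0∞)) := by
  classical
  funext x; simp [ind, Set.indicator_apply]

lemma ind_of_mem {Q : DyadicCube d} {x} (h : x ∈ Q.toSet) : ind Q x = 1 := by
  simp [ind, h]

lemma ind_of_not_mem {Q : DyadicCube d} {x} (h : x ∉ Q.toSet) : ind Q x = 0 := by
  simp [ind, h]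

lemma indicator_eq_mul_ind (Q : DyadicCube d) (c : ℝ≥0∞) (x : Fin d → ℝ) :
    Q.toSet.indicator (fun _ => c) x = c * ind Q x := by
  classical
  by_cases h : x ∈ Q.toSet
  · simp [Set.indicator_apply, h, ind_of_mem h]
  · simp [Set.indicator_apply, h, ind_of_not_mem h]

lemma measurable_ind (Q : DyadicCube d) : Measurable (ind Q) := by
  rw [ind_def]
  exact measurable_const.indicator (measurableSet_toSet Q)

/-! ### tsum machinery -/

noncomputable def tail (b : DyadicCube d → ℝ≥0∞) (R : DyadicCube d) : ℝ≥0∞ :=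
  ∑' Q : {Q : DyadicCube d // R.toSet ⊆ Q.toSet}, b Q.1

lemma tsum_swap (F : DyadicCube d → DyadicCube d → ℝ≥0∞) :
    ∑' Q : DyadicCube d, ∑' R : {R : DyadicCube d // R.toSet ⊆ Q.toSet}, F Q R.1
      = ∑' R : DyadicCube d, ∑' Q : {Q : DyadicCube d // R.toSet ⊆ Q.toSet}, F Q.1 R := by
  have h1 := ENNReal.tsum_sigma'
    (f := fun p : Σ Q : DyadicCube d, {R : DyadicCube d // R.toSet ⊆ Q.toSet} => F p.1 p.2.1)
  have h2 := ENNReal.tsum_sigma'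
    (f := fun p : Σ R : DyadicCube d, {Q : DyadicCube d // R.toSet ⊆ Q.toSet} => F p.2.1 p.1)
  rw [← h1, ← h2]
  exact Equiv.tsum_eq
    (⟨fun p => ⟨p.2.1, p.1, p.2.2⟩, fun p => ⟨p.2.1, p.1, p.2.2⟩,
      fun p => rfl, fun p => rfl⟩ :
      (Σ Q : DyadicCube d, {R : DyadicCube d // R.toSet ⊆ Q.toSet})
        ≃ (Σ R : DyadicCube d, {Q : DyadicCube d // R.toSet ⊆ Q.toSet}))
    (fun p => F p.2.1 p.1)

/-- Key identity: the sum-testing integrand in terms of `tail`. -/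
lemma sum_integrand_eq (lam b : DyadicCube d → ℝ≥0) (x : Fin d → ℝ) :
    (∑' Q : DyadicCube d, Set.indicator Q.toSet
        (fun y => (∑' R : {R : DyadicCube d // R.toSet ⊆ Q.toSet},
            R.1.toSet.indicator (fun _ => (lam R.1 : ℝ≥0∞)) y) * b Q) x)
      = ∑' R : DyadicCube d,
          (lam R : ℝ≥0∞) * tail (fun Q => (b Q : ℝ≥0∞)) R * ind R x := by
  classical
  have step1 : ∀ Q : DyadicCube d, Set.indicator Q.toSet
      (fun y => (∑' R : {R : DyadicCube d // R.toSet ⊆ Q.toSet},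
          R.1.toSet.indicator (fun _ => (lam R.1 : ℝ≥0∞)) y) * b Q) x
      = ∑' R : {R : DyadicCube d // R.toSet ⊆ Q.toSet},
          (lam R.1 : ℝ≥0∞) * (b Q : ℝ≥0∞) * ind R.1 x := by
    intro Q
    rw [Set.indicator_apply]
    split_ifs with hx
    · rw [← ENNReal.tsum_mul_right]
      refine tsum_congr fun R => ?_
      rw [indicator_eq_mul_ind]
      ring
    · symm
      refine ENNReal.tsum_eq_zero.mpr fun R => ?_
      have : x ∉ R.1.toSet := fun hmem => hx (R.2 hmem)
      rw [ind_of_not_mem this, mul_zero]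
  rw [tsum_congr step1, tsum_swap (fun Q R => (lam R : ℝ≥0∞) * (b Q : ℝ≥0∞) * ind R x)]
  refine tsum_congr fun R => ?_
  calc ∑' Q : {Q : DyadicCube d // R.toSet ⊆ Q.toSet},
        (lam R : ℝ≥0∞) * (b Q.1 : ℝ≥0∞) * ind R x
      = ∑' Q : {Q : DyadicCube d // R.toSet ⊆ Q.toSet},
        ((lam R : ℝ≥0∞) * ind R x) * (b Q.1 : ℝ≥0∞) := by
        refine tsum_congr fun Q => by ring
    _ = ((lam R : ℝ≥0∞) * ind R x) * tail (fun Q => (b Q : ℝ≥0∞)) R := ENNReal.tsum_mul_left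
    _ = (lam R : ℝ≥0∞) * tail (fun Q => (b Q : ℝ≥0∞)) R * ind R x := by ring

lemma tail_le_sum {b : DyadicCube d → ℝ≥0∞} {Q : DyadicCube d} {x : Fin d → ℝ}
    (hx : x ∈ Q.toSet) :
    tail b Q ≤ ∑' Q' : DyadicCube d, b Q' * ind Q' x := by
  have h1 : tail b Q = ∑' Q' : {Q' : DyadicCube d // Q.toSet ⊆ Q'.toSet}, b Q'.1 * ind Q'.1 x := by
    refine tsum_congr fun Q' => ?_
    rw [ind_of_mem (Q'.2 hx), mul_one]
  rw [h1]
  have h2 : (∑' Q' : {Q' : DyadicCube d // Q.toSet ⊆ Q'.toSet}, b Q'.1 * ind Q'.1 x)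
      = ∑' Q', Set.indicator {Q' : DyadicCube d | Q.toSet ⊆ Q'.toSet}
          (fun Q' => b Q' * ind Q' x) Q' :=
    tsum_subtype {Q' : DyadicCube d | Q.toSet ⊆ Q'.toSet} (fun Q' => b Q' * ind Q' x)
  rw [h2]
  refine ENNReal.tsum_le_tsum fun Q' => ?_
  classical
  rw [Set.indicator_apply]
  split_ifs <;> simp

/-! ### monotone convergence machinery -/

lemma tsum_iSup_mono {ι : Type*} [Countable ι] {f : ℕ → ι → ℝ≥0∞} (hf : Monotone f) :
    ⨆ n, ∑' i, f n i = ∑' i, ⨆ n, f n i := by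
  letI : MeasurableSpace ι := ⊤
  haveI : MeasurableSingletonClass ι := ⟨fun _ => trivial⟩
  calc ⨆ n, ∑' i, f n i = ⨆ n, ∫⁻ i, f n i ∂Measure.count := by
        simp_rw [MeasureTheory.lintegral_count]
    _ = ∫⁻ i, ⨆ n, f n i ∂Measure.count :=
        (lintegral_iSup (fun _ => measurable_from_top) hf).symm
    _ = ∑' i, ⨆ n, f n i := MeasureTheory.lintegral_count _

lemma iSup_rpow {ι : Type*} {t : ℝ} (ht : 0 < t) (f : ι → ℝ≥0∞) :
    (⨆ i, f i) ^ t = ⨆ i, (f i) ^ t :=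
  (ENNReal.orderIsoRpow t ht).map_iSup f

lemma iSup_min_nat (t : ℝ≥0∞) : ⨆ n : ℕ, min t (n : ℝ≥0∞) = t := by
  refine le_antisymm (iSup_le fun n => min_le_left _ _) ?_
  rcases eq_or_ne t ∞ with h | h
  · subst h
    have : ∀ n : ℕ, min (⊤:ℝ≥0∞) (n:ℝ≥0∞) = (n:ℝ≥0∞) := fun n => min_eq_right le_top
    simp_rw [this]
    rw [top_le_iff, ← ENNReal.iSup_natCast]
  · obtain ⟨n, hn⟩ := ENNReal.exists_nat_gt h
    exact le_iSup_of_le n (le_min le_rfl hn.le)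

noncomputable def eLp (μ : Measure (Fin d → ℝ)) (t : ℝ) (f : (Fin d → ℝ) → ℝ≥0∞) : ℝ≥0∞ :=
  (∫⁻ x, f x ^ t ∂μ) ^ (1/t)

lemma eLp_mono (μ : Measure (Fin d → ℝ)) {t : ℝ} (ht : 0 < t) {f g : (Fin d → ℝ) → ℝ≥0∞}
    (h : ∀ x, f x ≤ g x) : eLp μ t f ≤ eLp μ t g :=
  ENNReal.rpow_le_rpow (lintegral_mono fun x => ENNReal.rpow_le_rpow (h x) ht.le)
    (by positivity)

lemma eLp_iSup (μ : Measure (Fin d → ℝ)) {t : ℝ} (ht : 0 < t)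
    {f : ℕ → (Fin d → ℝ) → ℝ≥0∞} (hm : ∀ n, Measurable (f n)) (hmono : Monotone f) :
    ⨆ n, eLp μ t (f n) = eLp μ t (fun x => ⨆ n, f n x) := by
  have hcont : Measurable (fun y : ℝ≥0∞ => y ^ t) :=
    ((ENNReal.orderIsoRpow t ht).toHomeomorph.continuous).measurable
  unfold eLp
  rw [show (fun x => (⨆ n, f n x) ^ t) = fun x => ⨆ n, (f n x) ^ t from
    funext fun x => iSup_rpow ht _]
  rw [lintegral_iSup (f := fun n x => f n x ^ t) (fun n => hcont.comp (hm n))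
    (fun n m hnm x => ENNReal.rpow_le_rpow (hmono hnm x) ht.le)]
  exact (iSup_rpow (t := 1/t) (by positivity) _).symm
/-! ### The construction for the converse direction -/

noncomputable def cfun (a : DyadicCube d → ℝ≥0) (n : ℕ) (Q : DyadicCube d) : ℝ≥0∞ :=
  ⨆ Q' : {Q' : DyadicCube d // Q.toSet ⊆ Q'.toSet}, ((min (a Q'.1) n : ℝ≥0) : ℝ≥0∞)

open Classical in
noncomputable def bfun (a : DyadicCube d → ℝ≥0) (n : ℕ) (Q : DyadicCube d) : ℝ≥0 :=
  if -(n:ℤ) ≤ Q.k ∧ Q.k < n then (cfun a n Q - cfun a n (up Q)).toNNReal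
  else if Q.k = n then (cfun a n Q).toNNReal else 0

lemma cfun_le (a : DyadicCube d → ℝ≥0) (n : ℕ) (Q : DyadicCube d) :
    cfun a n Q ≤ (n : ℝ≥0∞) := by
  refine iSup_le fun Q' => ?_
  calc ((min (a Q'.1) n : ℝ≥0) : ℝ≥0∞) ≤ ((n : ℝ≥0) : ℝ≥0∞) :=
        ENNReal.coe_le_coe.mpr (min_le_right _ _)
    _ = (n : ℝ≥0∞) := by simp

lemma cfun_ne_top (a : DyadicCube d → ℝ≥0) (n : ℕ) (Q : DyadicCube d) :
    cfun a n Q ≠ ∞ :=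
  ne_top_of_le_ne_top (ENNReal.natCast_ne_top n) (cfun_le a n Q)

lemma cfun_anti {a : DyadicCube d → ℝ≥0} {n : ℕ} {Q Q' : DyadicCube d}
    (h : Q.toSet ⊆ Q'.toSet) : cfun a n Q' ≤ cfun a n Q :=
  iSup_le fun Q'' => le_iSup_of_le ⟨Q''.1, h.trans Q''.2⟩ le_rfl

lemma self_le_cfun (a : DyadicCube d → ℝ≥0) (n : ℕ) (Q : DyadicCube d) :
    ((min (a Q) n : ℝ≥0) : ℝ≥0∞) ≤ cfun a n Q :=
  le_iSup_of_le ⟨Q, subset_rfl⟩ le_rfl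

lemma cfun_le_sup (a : DyadicCube d → ℝ≥0) (n : ℕ) {Q : DyadicCube d} {x : Fin d → ℝ}
    (hx : x ∈ Q.toSet) :
    cfun a n Q ≤ ⨆ R : DyadicCube d, (a R : ℝ≥0∞) * ind R x := by
  refine iSup_le fun Q' => le_iSup_of_le Q'.1 ?_
  rw [ind_of_mem (Q'.2 hx), mul_one]
  exact_mod_cast (min_le_left (a Q'.1) (n:ℝ≥0))

lemma bfun_coe_mid {a : DyadicCube d → ℝ≥0} {n : ℕ} {Q : DyadicCube d}
    (h1 : -(n:ℤ) ≤ Q.k) (h2 : Q.k < n) :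
    (bfun a n Q : ℝ≥0∞) = cfun a n Q - cfun a n (up Q) := by
  rw [bfun, if_pos ⟨h1, h2⟩]
  exact ENNReal.coe_toNNReal
    (ne_top_of_le_ne_top (cfun_ne_top a n Q) tsub_le_self)

lemma bfun_coe_top {a : DyadicCube d → ℝ≥0} {n : ℕ} {Q : DyadicCube d}
    (h : Q.k = (n:ℤ)) : (bfun a n Q : ℝ≥0∞) = cfun a n Q := by
  rw [bfun, if_neg (by omega), if_pos h]
  exact ENNReal.coe_toNNReal (cfun_ne_top a n Q)

lemma bfun_eq_zero {a : DyadicCube d → ℝ≥0} {n : ℕ} {Q : DyadicCube d}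
    (h : ¬(-(n:ℤ) ≤ Q.k ∧ Q.k ≤ n)) : bfun a n Q = 0 := by
  rw [bfun, if_neg (by omega), if_neg (by omega)]

lemma telescope (a : DyadicCube d → ℝ≥0) (n : ℕ) (x : Fin d → ℝ) :
    ∀ m : ℤ, m ≤ (n:ℤ) → -(n:ℤ) ≤ m →
      ∑ k ∈ Finset.Icc m (n:ℤ), (bfun a n (cubeAt k x) : ℝ≥0∞) = cfun a n (cubeAt m x) := by
  intro m hm
  refine Int.le_induction_down
    (motive := fun m _ => -(n:ℤ) ≤ m →
      ∑ k ∈ Finset.Icc m (n:ℤ), (bfun a n (cubeAt k x) : ℝ≥0∞) = cfun a n (cubeAt m x))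
    ?_ ?_ m hm
  · intro _
    rw [Finset.Icc_self, Finset.sum_singleton]
    exact bfun_coe_top (cubeAt_k (n:ℤ) x)
  · intro m' hm' ih hneg
    have hins : Finset.Icc (m'-1) (n:ℤ) = insert (m'-1) (Finset.Icc m' (n:ℤ)) := by
      ext z; simp only [Finset.mem_Icc, Finset.mem_insert]; omega
    rw [hins, Finset.sum_insert (by simp only [Finset.mem_Icc]; omega)]
    rw [ih (by omega)]
    have hcoe : (bfun a n (cubeAt (m'-1) x) : ℝ≥0∞)
        = cfun a n (cubeAt (m'-1) x) - cfun a n (up (cubeAt (m'-1) x)) :=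
      bfun_coe_mid (by rw [cubeAt_k]; omega) (by rw [cubeAt_k]; omega)
    rw [hcoe, up_cubeAt, show m' - 1 + 1 = m' by ring]
    exact tsub_add_cancel_of_le (cfun_anti (cubeAt_mono (by omega) x))

lemma claim_i (a : DyadicCube d → ℝ≥0) (n : ℕ) (x : Fin d → ℝ) :
    ∑' Q : DyadicCube d, (bfun a n Q : ℝ≥0∞) * ind Q x
      ≤ ⨆ Q : DyadicCube d, (a Q : ℝ≥0∞) * ind Q x := by
  classical
  have hre : ∑' k : ℤ, ((bfun a n (cubeAt k x) : ℝ≥0∞) * ind (cubeAt k x) x)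
      = ∑' Q : DyadicCube d, (bfun a n Q : ℝ≥0∞) * ind Q x := by
    refine Function.Injective.tsum_eq (f := fun Q : DyadicCube d => (bfun a n Q : ℝ≥0∞) * ind Q x)
      (cubeAt_injective x) ?_
    intro Q hQ
    by_cases hx : x ∈ Q.toSet
    · exact ⟨Q.k, (eq_cubeAt_of_mem hx).symm⟩
    · exact absurd (by simp only []; rw [ind_of_not_mem hx, mul_zero]) hQ
  rw [← hre]
  have hval : ∀ k : ℤ, (bfun a n (cubeAt k x) : ℝ≥0∞) * ind (cubeAt k x) x
      = (bfun a n (cubeAt k x) : ℝ≥0∞) := fun k => by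
    rw [ind_of_mem (mem_cubeAt k x), mul_one]
  rw [tsum_congr hval]
  have hzero : ∀ k : ℤ, k ∉ Finset.Icc (-(n:ℤ)) (n:ℤ) → (bfun a n (cubeAt k x) : ℝ≥0∞) = 0 := by
    intro k hk
    rw [bfun_eq_zero (by rw [cubeAt_k]; simp only [Finset.mem_Icc] at hk; omega)]
    simp
  rw [tsum_eq_sum hzero, telescope a n x (-(n:ℤ)) (by omega) le_rfl]
  exact (cfun_le_sup a n (mem_cubeAt (-(n:ℤ)) x))

lemma cfun_le_tail (a : DyadicCube d → ℝ≥0) (n : ℕ) {R : DyadicCube d} {x : Fin d → ℝ}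
    (hx : x ∈ R.toSet) (h1 : -(n:ℤ) ≤ R.k) (h2 : R.k ≤ (n:ℤ)) :
    cfun a n R ≤ tail (fun Q => (bfun a n Q : ℝ≥0∞)) R := by
  classical
  have hR : R = cubeAt R.k x := eq_cubeAt_of_mem hx
  have hsub : ∀ k : ℤ, R.k ≤ k → R.toSet ⊆ (cubeAt k x).toSet := fun k hk => by
    conv_lhs => rw [hR]
    exact cubeAt_mono hk x
  have htel : ∑ k ∈ Finset.Icc R.k (n:ℤ), (bfun a n (cubeAt k x) : ℝ≥0∞) = cfun a n R := by
    conv_rhs => rw [hR]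
    exact telescope a n x R.k h2 h1
  rw [← htel]
  set s : Finset {Q : DyadicCube d // R.toSet ⊆ Q.toSet} :=
    (Finset.Icc R.k (n:ℤ)).attach.image
      (fun k => ⟨cubeAt k.1 x, hsub k.1 (Finset.mem_Icc.mp k.2).1⟩) with hs
  have hinj : ∀ k ∈ (Finset.Icc R.k (n:ℤ)).attach, ∀ l ∈ (Finset.Icc R.k (n:ℤ)).attach,
      (⟨cubeAt k.1 x, hsub k.1 (Finset.mem_Icc.mp k.2).1⟩ :
        {Q : DyadicCube d // R.toSet ⊆ Q.toSet})
      = ⟨cubeAt l.1 x, hsub l.1 (Finset.mem_Icc.mp l.2).1⟩ → k = l := by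
    intro k _ l _ h
    have := congrArg Subtype.val h
    exact Subtype.ext (cubeAt_injective x this)
  calc ∑ k ∈ Finset.Icc R.k (n:ℤ), (bfun a n (cubeAt k x) : ℝ≥0∞)
      = ∑ k ∈ (Finset.Icc R.k (n:ℤ)).attach, (bfun a n (cubeAt k.1 x) : ℝ≥0∞) :=
        (Finset.sum_attach _ _).symm
    _ = ∑ Q ∈ s, (bfun a n Q.1 : ℝ≥0∞) := by
        rw [hs, Finset.sum_image hinj]
    _ ≤ ∑' Q : {Q : DyadicCube d // R.toSet ⊆ Q.toSet}, (bfun a n Q.1 : ℝ≥0∞) :=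
        ENNReal.sum_le_tsum s
/-! ### Truncations of `a` -/

open Classical in
noncomputable def a2 (a : DyadicCube d → ℝ≥0) (n : ℕ) (R : DyadicCube d) : ℝ≥0 :=
  if -(n:ℤ) ≤ R.k ∧ R.k ≤ (n:ℤ) then min (a R) (n:ℝ≥0) else 0

lemma a2_mono (a : DyadicCube d → ℝ≥0) {n m : ℕ} (hnm : n ≤ m) (R : DyadicCube d) :
    a2 a n R ≤ a2 a m R := by
  have hc : (n:ℤ) ≤ (m:ℤ) := by exact_mod_cast hnm
  rw [a2, a2]
  split_ifs with h1 h2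
  · exact min_le_min le_rfl (Nat.cast_le.mpr hnm)
  · exact absurd ⟨by omega, by omega⟩ h2
  · exact zero_le
  · exact le_rfl

lemma iSup_a2 (a : DyadicCube d → ℝ≥0) (R : DyadicCube d) :
    ⨆ n : ℕ, (a2 a n R : ℝ≥0∞) = (a R : ℝ≥0∞) := by
  refine le_antisymm (iSup_le fun n => ?_) ?_
  · rw [a2]; split_ifs
    · exact_mod_cast min_le_left _ _
    · simp
  · set n₀ := max R.k.natAbs ⌈(a R : ℝ≥0)⌉₊ with hn0
    have h1 : R.k.natAbs ≤ n₀ := le_max_left _ _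
    have h1' : (R.k.natAbs : ℤ) ≤ (n₀ : ℤ) := by exact_mod_cast h1
    have hwin : -(n₀:ℤ) ≤ R.k ∧ R.k ≤ (n₀:ℤ) := by omega
    have hle : a R ≤ (n₀:ℝ≥0) := by
      calc a R ≤ (⌈(a R:ℝ≥0)⌉₊ : ℝ≥0) := Nat.le_ceil _
        _ ≤ (n₀:ℝ≥0) := Nat.cast_le.mpr (le_max_right _ _)
    refine le_iSup_of_le n₀ ?_
    rw [a2, if_pos hwin, min_eq_left hle]

lemma claim_ii (lam a : DyadicCube d → ℝ≥0) (n : ℕ) (x : Fin d → ℝ) :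
    ∑' R : DyadicCube d, (lam R:ℝ≥0∞) * (a2 a n R : ℝ≥0∞) * ind R x
      ≤ ∑' R : DyadicCube d,
          (lam R:ℝ≥0∞) * tail (fun Q => (bfun a n Q : ℝ≥0∞)) R * ind R x := by
  refine ENNReal.tsum_le_tsum fun R => ?_
  by_cases hx : x ∈ R.toSet
  · refine mul_le_mul_left (mul_le_mul_right ?_ _) _
    rw [a2]; split_ifs with hw
    · calc ((min (a R) (n:ℝ≥0) : ℝ≥0):ℝ≥0∞) ≤ cfun a n R := self_le_cfun a n R
        _ ≤ _ := cfun_le_tail a n hx hw.1 hw.2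
    · simp
  · simp [ind_of_not_mem hx]

/-! ### The two directions -/

lemma dir1 {p q : ℝ} (hp : 0 < p) (hq : 0 < q) (σ ω : Measure (Fin d → ℝ))
    (lam : DyadicCube d → ℝ≥0) (C : ℝ≥0∞)
    (H : ∀ a : DyadicCube d → ℝ≥0,
      eLp ω q (fun x => ∑' Q : DyadicCube d, (lam Q : ℝ≥0∞) * (a Q : ℝ≥0∞) * ind Q x)
        ≤ C * eLp σ p (fun x => ⨆ Q : DyadicCube d, (a Q : ℝ≥0∞) * ind Q x))
    (b : DyadicCube d → ℝ≥0) :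
    eLp ω q (fun x => ∑' R : DyadicCube d,
        (lam R : ℝ≥0∞) * tail (fun Q => (b Q:ℝ≥0∞)) R * ind R x)
      ≤ C * eLp σ p (fun x => ∑' Q : DyadicCube d, (b Q : ℝ≥0∞) * ind Q x) := by
  set T := tail (fun Q => (b Q : ℝ≥0∞)) with hT
  set aN : ℕ → DyadicCube d → ℝ≥0 := fun n R => (min (T R) (n:ℝ≥0∞)).toNNReal with haNdef
  have haN : ∀ (n : ℕ) R, ((aN n R : ℝ≥0∞)) = min (T R) (n:ℝ≥0∞) := fun n R =>
    ENNReal.coe_toNNReal (ne_top_of_le_ne_top (ENNReal.natCast_ne_top n) (min_le_right _ _))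
  have haNmono : ∀ {n m : ℕ}, n ≤ m → ∀ Q, (aN n Q : ℝ≥0∞) ≤ (aN m Q : ℝ≥0∞) := by
    intro n m hnm Q
    rw [haN, haN]; exact min_le_min le_rfl (Nat.cast_le.mpr hnm)
  set f : ℕ → (Fin d → ℝ) → ℝ≥0∞ :=
    fun n x => ∑' Q : DyadicCube d, (lam Q:ℝ≥0∞) * (aN n Q:ℝ≥0∞) * ind Q x with hf
  have hmono : Monotone f := fun n m hnm x => ENNReal.tsum_le_tsum fun Q =>
    mul_le_mul_left (mul_le_mul_right (haNmono hnm Q) _) _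
  have hmeas : ∀ n, Measurable (f n) := fun n =>
    Measurable.ennreal_tsum fun Q => (measurable_ind Q).const_mul _
  have hsup : ∀ x, (⨆ n, f n x) = ∑' Q : DyadicCube d, (lam Q:ℝ≥0∞) * T Q * ind Q x := by
    intro x
    rw [hf]
    dsimp only
    rw [tsum_iSup_mono (f := fun n Q => (lam Q:ℝ≥0∞) * (aN n Q:ℝ≥0∞) * ind Q x)
      (fun n m hnm Q => mul_le_mul_left (mul_le_mul_right (haNmono hnm Q) _) _)]
    refine tsum_congr fun Q => ?_
    conv_rhs => rw [← iSup_min_nat (T Q)]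
    rw [ENNReal.mul_iSup, ENNReal.iSup_mul]
    exact iSup_congr fun n => by rw [haN]
  have hRHS : ∀ n, eLp σ p (fun x => ⨆ Q : DyadicCube d, (aN n Q : ℝ≥0∞) * ind Q x)
      ≤ eLp σ p (fun x => ∑' Q : DyadicCube d, (b Q:ℝ≥0∞) * ind Q x) := by
    intro n
    refine eLp_mono σ hp fun x => ?_
    refine iSup_le fun Q => ?_
    by_cases hx : x ∈ Q.toSet
    · rw [ind_of_mem hx, mul_one]
      calc (aN n Q : ℝ≥0∞) = min (T Q) (n:ℝ≥0∞) := haN n Q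
        _ ≤ T Q := min_le_left _ _
        _ ≤ _ := tail_le_sum hx
    · rw [ind_of_not_mem hx, mul_zero]; exact zero_le
  have hL : ⨆ n, eLp ω q (f n)
      = eLp ω q (fun x => ∑' Q : DyadicCube d, (lam Q:ℝ≥0∞) * T Q * ind Q x) := by
    rw [eLp_iSup ω hq hmeas hmono]
    exact congrArg _ (funext hsup)
  rw [← hL]
  exact iSup_le fun n => (H (aN n)).trans (mul_le_mul_right (hRHS n) C)

lemma dir2 {p q : ℝ} (hp : 0 < p) (hq : 0 < q) (σ ω : Measure (Fin d → ℝ))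
    (lam : DyadicCube d → ℝ≥0) (C : ℝ≥0∞)
    (H : ∀ b : DyadicCube d → ℝ≥0,
      eLp ω q (fun x => ∑' R : DyadicCube d,
          (lam R : ℝ≥0∞) * tail (fun Q => (b Q:ℝ≥0∞)) R * ind R x)
        ≤ C * eLp σ p (fun x => ∑' Q : DyadicCube d, (b Q : ℝ≥0∞) * ind Q x))
    (a : DyadicCube d → ℝ≥0) :
    eLp ω q (fun x => ∑' Q : DyadicCube d, (lam Q : ℝ≥0∞) * (a Q : ℝ≥0∞) * ind Q x)
      ≤ C * eLp σ p (fun x => ⨆ Q : DyadicCube d, (a Q : ℝ≥0∞) * ind Q x) := by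
  set f : ℕ → (Fin d → ℝ) → ℝ≥0∞ :=
    fun n x => ∑' Q : DyadicCube d, (lam Q:ℝ≥0∞) * (a2 a n Q:ℝ≥0∞) * ind Q x with hf
  have hmono : Monotone f := fun n m hnm x => ENNReal.tsum_le_tsum fun Q =>
    mul_le_mul_left (mul_le_mul_right (ENNReal.coe_le_coe.mpr (a2_mono a hnm Q)) _) _
  have hmeas : ∀ n, Measurable (f n) := fun n =>
    Measurable.ennreal_tsum fun Q => (measurable_ind Q).const_mul _
  have hsup : ∀ x, (⨆ n, f n x)
      = ∑' Q : DyadicCube d, (lam Q:ℝ≥0∞) * (a Q:ℝ≥0∞) * ind Q x := by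
    intro x
    rw [hf]
    dsimp only
    rw [tsum_iSup_mono (f := fun n Q => (lam Q:ℝ≥0∞) * (a2 a n Q:ℝ≥0∞) * ind Q x)
      (fun n m hnm Q =>
        mul_le_mul_left (mul_le_mul_right (ENNReal.coe_le_coe.mpr (a2_mono a hnm Q)) _) _)]
    refine tsum_congr fun Q => ?_
    conv_rhs => rw [← iSup_a2 a Q]
    rw [ENNReal.mul_iSup, ENNReal.iSup_mul]
  have hbound : ∀ n, eLp ω q (f n)
      ≤ C * eLp σ p (fun x => ⨆ Q : DyadicCube d, (a Q:ℝ≥0∞) * ind Q x) := fun n =>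
    calc eLp ω q (f n)
        ≤ eLp ω q (fun x => ∑' R : DyadicCube d,
            (lam R : ℝ≥0∞) * tail (fun Q => (bfun a n Q:ℝ≥0∞)) R * ind R x) :=
          eLp_mono ω hq (claim_ii lam a n)
      _ ≤ C * eLp σ p (fun x => ∑' Q : DyadicCube d, (bfun a n Q:ℝ≥0∞) * ind Q x) :=
          H (bfun a n)
      _ ≤ C * eLp σ p (fun x => ⨆ Q : DyadicCube d, (a Q:ℝ≥0∞) * ind Q x) :=
          mul_le_mul_right (eLp_mono σ hp (claim_i a n)) C
  have hL : ⨆ n, eLp ω q (f n)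
      = eLp ω q (fun x => ∑' Q : DyadicCube d, (lam Q:ℝ≥0∞) * (a Q:ℝ≥0∞) * ind Q x) := by
    rw [eLp_iSup ω hq hmeas hmono]
    exact congrArg _ (funext hsup)
  rw [← hL]
  exact iSup_le hbound

end Stmt6Aux

/-- sup-testing with `{λ_Q}` is equivalent, with the same constant, to
sum-testing with the localized sums `ρ_Q := ∑_{R ⊆ Q} λ_R 1_R`. -/
theorem stmt6 (d : ℕ) (p q : ℝ) (hp : 0 < p) (hq : 0 < q)
    (σ ω : Measure (Fin d → ℝ))
    [IsLocallyFiniteMeasure σ] [IsLocallyFiniteMeasure ω]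
    (lam : DyadicCube d → ℝ≥0) (C : ℝ≥0∞) :
    (∀ a : DyadicCube d → ℝ≥0,
        (∫⁻ x, (∑' Q : DyadicCube d,
            Q.toSet.indicator (fun _ => (lam Q : ℝ≥0∞) * a Q) x) ^ q ∂ω) ^ (1/q)
          ≤ C * (∫⁻ x, (⨆ Q : DyadicCube d,
              Q.toSet.indicator (fun _ => (a Q : ℝ≥0∞)) x) ^ p ∂σ) ^ (1/p)) ↔
    (∀ b : DyadicCube d → ℝ≥0,
        (∫⁻ x, (∑' Q : DyadicCube d,
            Set.indicator Q.toSet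
              (fun y => (∑' R : {R : DyadicCube d // R.toSet ⊆ Q.toSet},
                  R.1.toSet.indicator (fun _ => (lam R.1 : ℝ≥0∞)) y) * b Q) x) ^ q ∂ω) ^ (1/q)
          ≤ C * (∫⁻ x, (∑' Q : DyadicCube d,
              Q.toSet.indicator (fun _ => (b Q : ℝ≥0∞)) x) ^ p ∂σ) ^ (1/p)) := by
  classical
  simp only [Stmt6Aux.sum_integrand_eq lam]
  simp only [Stmt6Aux.indicator_eq_mul_ind]
  exact ⟨fun H => Stmt6Aux.dir1 hp hq σ ω lam C H,
    fun H => Stmt6Aux.dir2 hp hq σ ω lam C H⟩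
end

section
/- Key relation 1 for the equivalence of sum and sup testing: given a non-negative family {b_Q} indexed by dyadic cubes, define a_Q := ∑_{R ⊇ Q} b_R. Then pointwise ∑_Q ρ_Q b_Q 1_Q = ∑_Q λ_Q a_Q 1_Q and sup_Q a_Q 1_Q = ∑_Q b_Q 1_Q, where ρ_Q := ∑_{R ⊆ Q} λ_R 1_R. -/
open MeasureTheory ENNReal Filter
open scoped NNReal ENNReal

lemma dyadic_interval_nested {k K : ℤ} (hk : k ≤ K) {j J : ℤ} {x : ℝ}
    (h1 : (2:ℝ)^k*j ≤ x ∧ x < (2:ℝ)^k*(j+1)) (h2 : (2:ℝ)^K*J ≤ x ∧ x < (2:ℝ)^K*(J+1)) :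
    ∀ y : ℝ, (2:ℝ)^k*j ≤ y ∧ y < (2:ℝ)^k*(j+1) → (2:ℝ)^K*J ≤ y ∧ y < (2:ℝ)^K*(J+1) := by
  set N : ℤ := 2 ^ (K - k).toNat with hN
  have hNpos : 0 < N := pow_pos (by norm_num) _
  set m : ℤ := j / N with hm
  have hed : N * m + j % N = j := by rw [hm]; exact Int.mul_ediv_add_emod j N
  have hr0 : 0 ≤ j % N := Int.emod_nonneg j hNpos.ne'
  have hrN : j % N < N := Int.emod_lt_of_pos j hNpos
  have hdm : N * m ≤ j := by linarith
  have hdm2 : j + 1 ≤ N * (m + 1) := by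
    have hmm : N * (m + 1) = N * m + N := by ring
    linarith
  have hNR : (2:ℝ)^K = (2:ℝ)^k * (N : ℤ) := by
    rw [hN]
    push_cast
    rw [← zpow_natCast (2:ℝ) (K-k).toNat, Int.toNat_of_nonneg (by omega), ← zpow_add₀ (by norm_num : (2:ℝ) ≠ 0)]
    ring_nf
  have key : ∀ y : ℝ, (2:ℝ)^k*j ≤ y ∧ y < (2:ℝ)^k*(j+1) →
      (2:ℝ)^K*m ≤ y ∧ y < (2:ℝ)^K*(m+1) := by
    intro y ⟨hy1, hy2⟩
    constructor
    · calc (2:ℝ)^K*m = (2:ℝ)^k * ((N:ℝ) * m) := by rw [hNR]; push_cast; ring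
        _ ≤ (2:ℝ)^k * j := by
            apply mul_le_mul_of_nonneg_left _ (le_of_lt (zpow_pos (by norm_num) k))
            exact_mod_cast hdm
        _ ≤ y := hy1
    · calc y < (2:ℝ)^k * (j+1) := hy2
        _ ≤ (2:ℝ)^k * ((N:ℝ) * (m+1)) := by
            apply mul_le_mul_of_nonneg_left _ (le_of_lt (zpow_pos (by norm_num) k))
            exact_mod_cast hdm2
        _ = (2:ℝ)^K*(m+1) := by rw [hNR]; push_cast; ring
  have hxm := key x h1
  have hJm : J = m := by
    by_contra hne
    have hKpos : (0:ℝ) < (2:ℝ)^K := zpow_pos (by norm_num) K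
    rcases lt_or_gt_of_ne hne with h | h
    · have : (J:ℝ) + 1 ≤ m := by exact_mod_cast (by omega : J + 1 ≤ m)
      have : x < x := lt_of_lt_of_le h2.2
        (le_trans (by nlinarith) hxm.1)
      exact lt_irrefl _ this
    · have : (m:ℝ) + 1 ≤ J := by exact_mod_cast (by omega : m + 1 ≤ J)
      have : x < x := lt_of_lt_of_le hxm.2
        (le_trans (by nlinarith) h2.1)
      exact lt_irrefl _ this
  intro y hy
  rw [hJm]
  exact key y hy

lemma dyadic_nested {d : ℕ} {Q R : DyadicCube d} {x : Fin d → ℝ}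
    (hxQ : x ∈ Q.toSet) (hxR : x ∈ R.toSet) (hk : Q.k ≤ R.k) :
    Q.toSet ⊆ R.toSet := by
  intro y hy i
  exact dyadic_interval_nested hk (hxQ i) (hxR i) (y i) (hy i)

/-- with `a_Q := ∑_{R ⊇ Q} b_R`, pointwise
`∑_Q ρ_Q b_Q 1_Q = ∑_Q λ_Q a_Q 1_Q` and `sup_Q a_Q 1_Q = ∑_Q b_Q 1_Q`. -/
theorem stmt7 (d : ℕ) (lam b : DyadicCube d → ℝ≥0)
    (hlam : (Function.support lam).Finite) (hb : (Function.support b).Finite)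
    (a : DyadicCube d → ℝ≥0∞)
    (ha : ∀ Q : DyadicCube d,
      a Q = ∑' R : {R : DyadicCube d // Q.toSet ⊆ R.toSet}, (b R.1 : ℝ≥0∞)) :
    ∀ x : Fin d → ℝ,
      (∑' Q : DyadicCube d,
          Set.indicator Q.toSet
            (fun y => (∑' R : {R : DyadicCube d // R.toSet ⊆ Q.toSet},
                R.1.toSet.indicator (fun _ => (lam R.1 : ℝ≥0∞)) y) * b Q) x)
        = (∑' Q : DyadicCube d,
            Q.toSet.indicator (fun _ => (lam Q : ℝ≥0∞) * a Q) x) ∧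
      (⨆ Q : DyadicCube d, Q.toSet.indicator (fun _ => a Q) x)
        = ∑' Q : DyadicCube d, Q.toSet.indicator (fun _ => (b Q : ℝ≥0∞)) x := by
  classical
  intro x
  constructor
  · -- Part 1
    set F : DyadicCube d → DyadicCube d → ℝ≥0∞ := fun P Q =>
      if P.toSet ⊆ Q.toSet ∧ x ∈ P.toSet then (lam P : ℝ≥0∞) * b Q else 0 with hF
    have hL : ∀ Q : DyadicCube d,
        Set.indicator Q.toSet
          (fun y => (∑' R : {R : DyadicCube d // R.toSet ⊆ Q.toSet},
              R.1.toSet.indicator (fun _ => (lam R.1 : ℝ≥0∞)) y) * b Q) x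
        = ∑' P : DyadicCube d, F P Q := by
      intro Q
      by_cases hxQ : x ∈ Q.toSet
      · have hst : (∑' R : {R : DyadicCube d // R.toSet ⊆ Q.toSet},
            R.1.toSet.indicator (fun _ => (lam R.1 : ℝ≥0∞)) x * b Q)
            = ∑' P : DyadicCube d, Set.indicator {R : DyadicCube d | R.toSet ⊆ Q.toSet}
                (fun R => R.toSet.indicator (fun _ => (lam R : ℝ≥0∞)) x * b Q) P :=
          tsum_subtype {R : DyadicCube d | R.toSet ⊆ Q.toSet}
            (fun R => R.toSet.indicator (fun _ => (lam R : ℝ≥0∞)) x * b Q)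
        rw [Set.indicator_of_mem hxQ, ← ENNReal.tsum_mul_right, hst]
        refine tsum_congr fun P => ?_
        simp only [Set.indicator_apply, Set.mem_setOf_eq, hF]
        by_cases hPQ : P.toSet ⊆ Q.toSet <;> by_cases hxP : x ∈ P.toSet <;>
          simp [hPQ, hxP]
      · rw [Set.indicator_of_notMem hxQ]
        symm
        refine ENNReal.tsum_eq_zero.mpr fun P => ?_
        show (if P.toSet ⊆ Q.toSet ∧ x ∈ P.toSet then (lam P : ℝ≥0∞) * b Q else 0) = 0
        rw [if_neg]
        rintro ⟨h1, h2⟩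
        exact hxQ (h1 h2)
    have hR : ∀ P : DyadicCube d,
        P.toSet.indicator (fun _ => (lam P : ℝ≥0∞) * a P) x
        = ∑' Q : DyadicCube d, F P Q := by
      intro P
      by_cases hxP : x ∈ P.toSet
      · have hst : (∑' R : {R : DyadicCube d // P.toSet ⊆ R.toSet},
            (lam P : ℝ≥0∞) * b R.1)
            = ∑' Q : DyadicCube d, Set.indicator {R : DyadicCube d | P.toSet ⊆ R.toSet}
                (fun R => (lam P : ℝ≥0∞) * b R) Q :=
          tsum_subtype {R : DyadicCube d | P.toSet ⊆ R.toSet}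
            (fun R => (lam P : ℝ≥0∞) * b R)
        rw [Set.indicator_of_mem hxP, ha P, ← ENNReal.tsum_mul_left, hst]
        refine tsum_congr fun Q => ?_
        simp only [Set.indicator_apply, Set.mem_setOf_eq, hF]
        by_cases hPQ : P.toSet ⊆ Q.toSet <;> simp [hPQ, hxP]
      · rw [Set.indicator_of_notMem hxP]
        symm
        refine ENNReal.tsum_eq_zero.mpr fun Q => ?_
        show (if P.toSet ⊆ Q.toSet ∧ x ∈ P.toSet then (lam P : ℝ≥0∞) * b Q else 0) = 0
        rw [if_neg]
        rintro ⟨_, h2⟩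
        exact hxP h2
    calc (∑' Q : DyadicCube d, _) = ∑' Q : DyadicCube d, ∑' P : DyadicCube d, F P Q :=
          tsum_congr hL
      _ = ∑' P : DyadicCube d, ∑' Q : DyadicCube d, F P Q := ENNReal.tsum_comm
      _ = _ := (tsum_congr hR).symm
  · -- Part 2
    set T : Finset (DyadicCube d) :=
      hb.toFinset.filter (fun Q => x ∈ Q.toSet) with hT
    have hsup_le : ∀ Q0 : DyadicCube d,
        (⨆ Q : DyadicCube d, Q.toSet.indicator (fun _ => a Q) x)
        ≤ ∑' Q : DyadicCube d, Q.toSet.indicator (fun _ => (b Q : ℝ≥0∞)) x := by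
      intro _
      refine iSup_le fun Q => ?_
      by_cases hxQ : x ∈ Q.toSet
      · have hst : (∑' R : {R : DyadicCube d // Q.toSet ⊆ R.toSet}, (b R.1 : ℝ≥0∞))
            = ∑' R : DyadicCube d,
                Set.indicator {R' : DyadicCube d | Q.toSet ⊆ R'.toSet}
                  (fun R' => (b R' : ℝ≥0∞)) R :=
          tsum_subtype {R' : DyadicCube d | Q.toSet ⊆ R'.toSet} (fun R' => (b R' : ℝ≥0∞))
        rw [Set.indicator_of_mem hxQ, ha Q, hst]
        refine ENNReal.tsum_le_tsum fun R => ?_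
        by_cases hQR : Q.toSet ⊆ R.toSet
        · rw [Set.indicator_of_mem (Set.mem_setOf_eq ▸ hQR),
            Set.indicator_of_mem (hQR hxQ)]
        · rw [Set.indicator_of_notMem (by exact hQR)]
          exact zero_le
      · rw [Set.indicator_of_notMem hxQ]
        exact zero_le
    by_cases hne : T.Nonempty
    · obtain ⟨Q0, hQ0T, hmin⟩ := T.exists_min_image (fun Q => Q.k) hne
      have hxQ0 : x ∈ Q0.toSet := (Finset.mem_filter.mp hQ0T).2
      refine le_antisymm (hsup_le Q0) ?_
      have h1 : (∑' Q : DyadicCube d, Q.toSet.indicator (fun _ => (b Q : ℝ≥0∞)) x)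
          ≤ a Q0 := by
        have hst : (∑' R : {R : DyadicCube d // Q0.toSet ⊆ R.toSet}, (b R.1 : ℝ≥0∞))
            = ∑' R : DyadicCube d,
                Set.indicator {R' : DyadicCube d | Q0.toSet ⊆ R'.toSet}
                  (fun R' => (b R' : ℝ≥0∞)) R :=
          tsum_subtype {R' : DyadicCube d | Q0.toSet ⊆ R'.toSet} (fun R' => (b R' : ℝ≥0∞))
        rw [ha Q0, hst]
        refine ENNReal.tsum_le_tsum fun Q => ?_
        by_cases hxQ : x ∈ Q.toSet
        · by_cases hbQ : b Q = 0
          · simp [hbQ]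
          · have hQT : Q ∈ T := by
              rw [hT, Finset.mem_filter, Set.Finite.mem_toFinset]
              exact ⟨hbQ, hxQ⟩
            have hsub : Q0.toSet ⊆ Q.toSet :=
              dyadic_nested hxQ0 hxQ (hmin Q hQT)
            rw [Set.indicator_of_mem hxQ, Set.indicator_of_mem (by exact hsub)]
        · rw [Set.indicator_of_notMem hxQ]
          exact zero_le
      refine le_trans h1 ?_
      have : a Q0 = Q0.toSet.indicator (fun _ => a Q0) x :=
        (Set.indicator_of_mem hxQ0 (fun _ => a Q0)).symm
      rw [this]
      exact le_iSup (fun Q : DyadicCube d => Q.toSet.indicator (fun _ => a Q) x) Q0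
    · have hT0 : ∀ Q : DyadicCube d, x ∈ Q.toSet → b Q = 0 := by
        intro Q hxQ
        by_contra hbQ
        exact hne ⟨Q, by rw [hT, Finset.mem_filter, Set.Finite.mem_toFinset]; exact ⟨hbQ, hxQ⟩⟩
      have hrhs : (∑' Q : DyadicCube d, Q.toSet.indicator (fun _ => (b Q : ℝ≥0∞)) x) = 0 := by
        refine ENNReal.tsum_eq_zero.mpr fun Q => ?_
        by_cases hxQ : x ∈ Q.toSet
        · rw [Set.indicator_of_mem hxQ]
          exact ENNReal.coe_eq_zero.mpr (hT0 Q hxQ)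
        · exact Set.indicator_of_notMem hxQ _
      rw [hrhs]
      refine le_antisymm (iSup_le fun Q => ?_) (zero_le)
      by_cases hxQ : x ∈ Q.toSet
      · rw [Set.indicator_of_mem hxQ, ha Q]
        refine le_of_eq (ENNReal.tsum_eq_zero.mpr fun R => ?_)
        have : b R.1 = 0 := hT0 R.1 (R.2 hxQ)
        simp [this]
      · rw [Set.indicator_of_notMem hxQ]
end

section
/- Sufficiency of the dual integral condition: let 0 < q < 1 ≤ p < ∞, let σ, ω be locally finite Borel measures on ℝ^d, and let {λ_Q} be a non-negative family indexed by dyadic cubes with λ_Q = 0 whenever σ(Q) = 0 or ω(Q) = 0. If ∫ ( ∑_Q λ_Q^q (ω(Q)/σ(Q)) 1_Q )^{p/(p−q)} dσ < ∞, then there is a constant C such that ‖∑_Q λ_Q a_Q 1_Q‖_{L^q(ω)} ≤ C ‖sup_Q a_Q 1_Q‖_{L^p(σ)} for all non-negative families {a_Q}. -/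
open MeasureTheory ENNReal Filter
open scoped NNReal ENNReal

instance {d : ℕ} : Countable (DyadicCube d) := by
  have h : Function.Injective (fun Q : DyadicCube d => (Q.k, Q.j)) := by
    intro a b hab; cases a; cases b; simp_all
  exact h.countable

lemma DyadicCube.measurableSet_toSet_s9 {d : ℕ} (Q : DyadicCube d) :
    MeasurableSet Q.toSet := by
  have : Q.toSet = ⋂ i, {x : Fin d → ℝ |
      (2:ℝ) ^ Q.k * (Q.j i) ≤ x i ∧ x i < (2:ℝ) ^ Q.k * (Q.j i + 1)} := by
    ext x; simp [DyadicCube.toSet]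
  rw [this]
  refine MeasurableSet.iInter fun i => MeasurableSet.inter ?_ ?_
  · exact measurableSet_le measurable_const (measurable_pi_apply i)
  · exact measurableSet_lt (measurable_pi_apply i) measurable_const

lemma DyadicCube.measure_lt_top {d : ℕ} (μ : Measure (Fin d → ℝ))
    [IsLocallyFiniteMeasure μ] (Q : DyadicCube d) : μ Q.toSet < ∞ := by
  have hsub : Q.toSet ⊆ Set.Icc (fun i => (2:ℝ) ^ Q.k * (Q.j i))
      (fun i => (2:ℝ) ^ Q.k * (Q.j i + 1)) := by
    intro x hx
    refine ⟨fun i => (hx i).1, fun i => (hx i).2.le⟩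
  exact lt_of_le_of_lt (measure_mono hsub) isCompact_Icc.measure_lt_top

lemma finset_rpow_le {ι : Type*} (s : Finset ι) (f : ι → ℝ≥0∞) {q : ℝ}
    (h0 : 0 < q) (h1 : q ≤ 1) : (∑ i ∈ s, f i) ^ q ≤ ∑ i ∈ s, f i ^ q := by
  classical
  induction s using Finset.induction_on with
  | empty => simp [ENNReal.zero_rpow_of_pos h0]
  | insert _ _ h ih =>
      rw [Finset.sum_insert h, Finset.sum_insert h]
      exact le_trans (ENNReal.rpow_add_le_add_rpow _ _ h0.le h1)
        (add_le_add_right ih _)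

lemma tsum_rpow_le {ι : Type*} [Countable ι] (f : ι → ℝ≥0∞) {q : ℝ}
    (h0 : 0 < q) (h1 : q ≤ 1) : (∑' i, f i) ^ q ≤ ∑' i, f i ^ q := by
  refine le_of_tendsto ((ENNReal.continuous_rpow_const.tendsto _).comp
    ENNReal.summable.hasSum) ?_
  filter_upwards with s
  exact le_trans (finset_rpow_le s f h0 h1) (ENNReal.sum_le_tsum s)

/-- sufficiency of the dual integral condition
`∫ (∑_Q λ_Q^q (ω(Q)/σ(Q)) 1_Q)^(p/(p−q)) dσ < ∞` for the sup-testing inequality. -/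
theorem stmt9 (d : ℕ) (p q : ℝ) (hq0 : 0 < q) (hq1 : q < 1) (hp1 : 1 ≤ p)
    (σ ω : Measure (Fin d → ℝ))
    [IsLocallyFiniteMeasure σ] [IsLocallyFiniteMeasure ω]
    (lam : DyadicCube d → ℝ≥0)
    (hlam : ∀ Q : DyadicCube d, σ Q.toSet = 0 ∨ ω Q.toSet = 0 → lam Q = 0)
    (hfin : (∫⁻ x, (∑' Q : DyadicCube d,
        Q.toSet.indicator
          (fun _ => (lam Q : ℝ≥0∞) ^ q * (ω Q.toSet / σ Q.toSet)) x) ^ (p/(p-q)) ∂σ) < ∞) :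
    ∃ C : ℝ≥0∞, C < ∞ ∧ ∀ a : DyadicCube d → ℝ≥0,
      (∫⁻ x, (∑' Q : DyadicCube d,
          Q.toSet.indicator (fun _ => (lam Q : ℝ≥0∞) * a Q) x) ^ q ∂ω) ^ (1/q)
        ≤ C * (∫⁻ x, (⨆ Q : DyadicCube d,
            Q.toSet.indicator (fun _ => (a Q : ℝ≥0∞)) x) ^ p ∂σ) ^ (1/p) := by
  classical
  have hp0 : (0:ℝ) < p := lt_of_lt_of_le one_pos hp1
  have hpq : (0:ℝ) < p - q := by linarith
  set Φ : (Fin d → ℝ) → ℝ≥0∞ := fun x => ∑' Q : DyadicCube d,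
      Q.toSet.indicator (fun _ => (lam Q : ℝ≥0∞) ^ q * (ω Q.toSet / σ Q.toSet)) x with hΦdef
  have hΦmeas : Measurable Φ := Measurable.ennreal_tsum fun Q =>
    measurable_const.indicator Q.measurableSet_toSet_s9
  have hfin' : (∫⁻ x, Φ x ^ (p/(p-q)) ∂σ) < ∞ := hfin
  set A : ℝ≥0∞ := (∫⁻ x, Φ x ^ (p/(p-q)) ∂σ) ^ ((p-q)/p) with hAdef
  have hAfin : A < ∞ := ENNReal.rpow_lt_top_of_nonneg (by positivity) hfin'.ne
  refine ⟨A ^ (1/q), ENNReal.rpow_lt_top_of_nonneg (by positivity) hAfin.ne, fun a => ?_⟩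
  set S : (Fin d → ℝ) → ℝ≥0∞ := fun x =>
    ⨆ Q : DyadicCube d, Q.toSet.indicator (fun _ => (a Q : ℝ≥0∞)) x with hSdef
  have hSmeas : Measurable S :=
    Measurable.iSup fun Q => measurable_const.indicator Q.measurableSet_toSet_s9
  -- step 1 : pointwise subadditivity of t ↦ t^q
  have step1 : ∀ x, (∑' Q : DyadicCube d,
      Q.toSet.indicator (fun _ => (lam Q : ℝ≥0∞) * a Q) x) ^ q
      ≤ ∑' Q : DyadicCube d,
        Q.toSet.indicator (fun _ => ((lam Q : ℝ≥0∞) * a Q) ^ q) x := by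
    intro x
    refine le_trans (tsum_rpow_le _ hq0 hq1.le) (le_of_eq (tsum_congr fun Q => ?_))
    by_cases hx : x ∈ Q.toSet <;> simp [hx, ENNReal.zero_rpow_of_pos hq0]
  -- step 2 : integrate
  have step2 : (∫⁻ x, (∑' Q : DyadicCube d,
      Q.toSet.indicator (fun _ => (lam Q : ℝ≥0∞) * a Q) x) ^ q ∂ω)
      ≤ ∑' Q : DyadicCube d, ((lam Q : ℝ≥0∞) * a Q) ^ q * ω Q.toSet := by
    calc (∫⁻ x, (∑' Q : DyadicCube d,
        Q.toSet.indicator (fun _ => (lam Q : ℝ≥0∞) * a Q) x) ^ q ∂ω)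
        ≤ ∫⁻ x, ∑' Q : DyadicCube d,
          Q.toSet.indicator (fun _ => ((lam Q : ℝ≥0∞) * a Q) ^ q) x ∂ω :=
          lintegral_mono step1
      _ = ∑' Q : DyadicCube d, ∫⁻ x,
          Q.toSet.indicator (fun _ => ((lam Q : ℝ≥0∞) * a Q) ^ q) x ∂ω :=
          lintegral_tsum fun Q =>
            (measurable_const.indicator Q.measurableSet_toSet_s9).aemeasurable
      _ = ∑' Q : DyadicCube d, ((lam Q : ℝ≥0∞) * a Q) ^ q * ω Q.toSet :=
          tsum_congr fun Q => lintegral_indicator_const Q.measurableSet_toSet_s9 _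
  -- step 3 : rewrite each term as an integral against σ
  have step3 : ∀ Q : DyadicCube d, ((lam Q : ℝ≥0∞) * a Q) ^ q * ω Q.toSet
      = ∫⁻ x, Q.toSet.indicator
          (fun _ => (lam Q : ℝ≥0∞) ^ q * (ω Q.toSet / σ Q.toSet) * (a Q : ℝ≥0∞) ^ q) x ∂σ := by
    intro Q
    rw [lintegral_indicator_const Q.measurableSet_toSet_s9,
      ENNReal.mul_rpow_of_nonneg _ _ hq0.le]
    by_cases h0 : lam Q = 0
    · simp [h0, ENNReal.zero_rpow_of_pos hq0]
    · have hσ0 : σ Q.toSet ≠ 0 := fun h => h0 (hlam Q (Or.inl h))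
      have hσt : σ Q.toSet ≠ ∞ := (DyadicCube.measure_lt_top σ Q).ne
      have hcancel : ω Q.toSet / σ Q.toSet * σ Q.toSet = ω Q.toSet :=
        ENNReal.div_mul_cancel hσ0 hσt
      calc (lam Q : ℝ≥0∞) ^ q * (a Q : ℝ≥0∞) ^ q * ω Q.toSet
          = (lam Q : ℝ≥0∞) ^ q * (a Q : ℝ≥0∞) ^ q
            * (ω Q.toSet / σ Q.toSet * σ Q.toSet) := by rw [hcancel]
        _ = (lam Q : ℝ≥0∞) ^ q * (ω Q.toSet / σ Q.toSet) * (a Q : ℝ≥0∞) ^ q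
            * σ Q.toSet := by ring
  -- step 4 : sum the integrals
  have step4 : ∑' Q : DyadicCube d, ((lam Q : ℝ≥0∞) * a Q) ^ q * ω Q.toSet
      = ∫⁻ x, ∑' Q : DyadicCube d, Q.toSet.indicator
          (fun _ => (lam Q : ℝ≥0∞) ^ q * (ω Q.toSet / σ Q.toSet) * (a Q : ℝ≥0∞) ^ q) x ∂σ := by
    rw [lintegral_tsum fun Q =>
      (measurable_const.indicator Q.measurableSet_toSet_s9).aemeasurable]
    exact tsum_congr step3
  -- step 5 : pointwise domination by Φ * S^q
  have step5 : ∀ x, (∑' Q : DyadicCube d, Q.toSet.indicator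
      (fun _ => (lam Q : ℝ≥0∞) ^ q * (ω Q.toSet / σ Q.toSet) * (a Q : ℝ≥0∞) ^ q) x)
      ≤ Φ x * S x ^ q := by
    intro x
    have h1 : ∀ Q : DyadicCube d, Q.toSet.indicator
        (fun _ => (lam Q : ℝ≥0∞) ^ q * (ω Q.toSet / σ Q.toSet) * (a Q : ℝ≥0∞) ^ q) x
        ≤ Q.toSet.indicator
          (fun _ => (lam Q : ℝ≥0∞) ^ q * (ω Q.toSet / σ Q.toSet)) x * S x ^ q := by
      intro Q
      by_cases hx : x ∈ Q.toSet
      · simp only [Set.indicator_of_mem hx]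
        refine mul_le_mul_right (ENNReal.rpow_le_rpow ?_ hq0.le) _
        calc (a Q : ℝ≥0∞) = Q.toSet.indicator (fun _ => (a Q : ℝ≥0∞)) x :=
              (Set.indicator_of_mem hx (fun _ => ((a Q : ℝ≥0) : ℝ≥0∞))).symm
          _ ≤ S x := le_iSup
              (fun R : DyadicCube d => R.toSet.indicator (fun _ => (a R : ℝ≥0∞)) x) Q
      · simp [hx]
    calc (∑' Q : DyadicCube d, Q.toSet.indicator
        (fun _ => (lam Q : ℝ≥0∞) ^ q * (ω Q.toSet / σ Q.toSet) * (a Q : ℝ≥0∞) ^ q) x)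
        ≤ ∑' Q : DyadicCube d, Q.toSet.indicator
          (fun _ => (lam Q : ℝ≥0∞) ^ q * (ω Q.toSet / σ Q.toSet)) x * S x ^ q :=
          ENNReal.tsum_le_tsum h1
      _ = Φ x * S x ^ q := by rw [ENNReal.tsum_mul_right]
  -- step 6 : Hölder
  have hconj : Real.HolderConjugate (p/(p-q)) (p/q) := by
    rw [Real.holderConjugate_iff]
    constructor
    · rw [lt_div_iff₀ hpq]; linarith
    · rw [← one_div, ← one_div, one_div_div, one_div_div]
      field_simp
      ring
  have hGmeas : Measurable fun x => S x ^ q :=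
    ENNReal.continuous_rpow_const.measurable.comp hSmeas
  have holder := ENNReal.lintegral_mul_le_Lp_mul_Lq σ hconj hΦmeas.aemeasurable
    hGmeas.aemeasurable
  simp only [Pi.mul_apply] at holder
  have hexp1 : (1 : ℝ) / (p/(p-q)) = (p-q)/p := one_div_div _ _
  have hexp2 : (1 : ℝ) / (p/q) = q/p := one_div_div _ _
  have hGp : ∀ x, (S x ^ q) ^ (p/q) = S x ^ p := by
    intro x
    rw [← ENNReal.rpow_mul]
    congr 1
    field_simp
  rw [hexp1, hexp2] at holder
  rw [lintegral_congr hGp] at holder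
  -- combine
  have main : (∫⁻ x, (∑' Q : DyadicCube d,
      Q.toSet.indicator (fun _ => (lam Q : ℝ≥0∞) * a Q) x) ^ q ∂ω)
      ≤ A * (∫⁻ x, S x ^ p ∂σ) ^ (q/p) := by
    refine le_trans step2 ?_
    rw [step4]
    refine le_trans (lintegral_mono step5) ?_
    exact holder
  calc (∫⁻ x, (∑' Q : DyadicCube d,
      Q.toSet.indicator (fun _ => (lam Q : ℝ≥0∞) * a Q) x) ^ q ∂ω) ^ (1/q)
      ≤ (A * (∫⁻ x, S x ^ p ∂σ) ^ (q/p)) ^ (1/q) :=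
        ENNReal.rpow_le_rpow main (by positivity)
    _ = A ^ (1/q) * ((∫⁻ x, S x ^ p ∂σ) ^ (q/p)) ^ (1/q) :=
        ENNReal.mul_rpow_of_nonneg _ _ (by positivity)
    _ = A ^ (1/q) * (∫⁻ x, S x ^ p ∂σ) ^ (1/p) := by
        have hq' : q ≠ 0 := hq0.ne'
        have hp' : p ≠ 0 := hp0.ne'
        have h2 : ((∫⁻ x, S x ^ p ∂σ) ^ (q/p)) ^ (1/q)
            = (∫⁻ x, S x ^ p ∂σ) ^ (1/p) := by
          rw [← ENNReal.rpow_mul, show q/p * (1/q) = 1/p by field_simp]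
        rw [h2]
end

section
/- Hölder direction of Maurey factorization: let (X,μ) be a measure space and q ∈ (0,1). Suppose Φ ≥ 0 is measurable with ∫ Φ dμ ≤ 1, and g ≥ 0 is measurable with g = 0 μ-a.e. on {Φ = 0} and ∫ g Φ^{−(1−q)/q} dμ ≤ C. Then (∫ g^q dμ)^{1/q} ≤ C. -/
open MeasureTheory ENNReal Filter
open scoped NNReal ENNReal

/-- Hölder direction of Maurey's factorization. -/
theorem stmt12 {X : Type*} [MeasurableSpace X] (μ : Measure X)
    (q : ℝ) (hq0 : 0 < q) (hq1 : q < 1)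
    (Φ g : X → ℝ≥0∞) (hΦm : Measurable Φ) (hgm : Measurable g)
    (hΦ : (∫⁻ x, Φ x ∂μ) ≤ 1)
    (hsupp : ∀ᵐ x ∂μ, Φ x = 0 → g x = 0)
    (C : ℝ≥0∞) (hC : (∫⁻ x, g x * Φ x ^ (-(1-q)/q) ∂μ) ≤ C) :
    (∫⁻ x, g x ^ q ∂μ) ^ (1/q) ≤ C := by
  have hΦlt : ∀ᵐ x ∂μ, Φ x ≠ ∞ :=
    ae_lt_top hΦm (hΦ.trans_lt one_lt_top).ne |>.mono fun x hx => hx.ne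
  -- a.e. identity: g^q = ((g * Φ^{-(1-q)/q})^q) * Φ^{1-q}
  have key : ∀ᵐ x ∂μ, g x ^ q =
      (g x * Φ x ^ (-(1-q)/q)) ^ q * Φ x ^ (1-q) := by
    filter_upwards [hsupp, hΦlt] with x h0 htop
    rcases eq_or_ne (Φ x) 0 with hΦ0 | hΦ0
    · rw [h0 hΦ0, hΦ0, zero_mul, ENNReal.zero_rpow_of_pos hq0, zero_mul]
    · rw [ENNReal.mul_rpow_of_nonneg _ _ hq0.le, mul_assoc, ← ENNReal.rpow_mul,
        ← ENNReal.rpow_add _ _ hΦ0 htop]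
      have h : -(1-q)/q * q + (1-q) = 0 := by field_simp; ring
      rw [h, ENNReal.rpow_zero, mul_one]
  have hconj : Real.HolderConjugate (1/q) (1/(1-q)) := by
    rw [Real.holderConjugate_iff]
    constructor
    · rw [lt_div_iff₀ hq0]; linarith
    · rw [one_div, one_div, inv_inv, inv_inv]; ring
  have hf : AEMeasurable (fun x => (g x * Φ x ^ (-(1-q)/q)) ^ q) μ :=
    ((hgm.mul (hΦm.pow_const _)).pow_const _).aemeasurable
  have hg2 : AEMeasurable (fun x => Φ x ^ (1-q)) μ :=
    (hΦm.pow_const _).aemeasurable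
  have holder := ENNReal.lintegral_mul_le_Lp_mul_Lq μ hconj hf hg2
  have hstep : (∫⁻ x, g x ^ q ∂μ) ≤ C ^ q * 1 ^ (1-q) := by
    calc (∫⁻ x, g x ^ q ∂μ)
        = ∫⁻ x, (fun x => (g x * Φ x ^ (-(1-q)/q)) ^ q) x *
            (fun x => Φ x ^ (1-q)) x ∂μ := lintegral_congr_ae key
      _ ≤ (∫⁻ x, ((g x * Φ x ^ (-(1-q)/q)) ^ q) ^ (1/q) ∂μ) ^ (1/(1/q)) *
          (∫⁻ x, (Φ x ^ (1-q)) ^ (1/(1-q)) ∂μ) ^ (1/(1/(1-q))) := holder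
      _ = (∫⁻ x, g x * Φ x ^ (-(1-q)/q) ∂μ) ^ q *
          (∫⁻ x, Φ x ∂μ) ^ (1-q) := by
            rw [one_div_one_div, one_div_one_div]
            congr 1
            · congr 1
              refine lintegral_congr fun x => ?_
              rw [← ENNReal.rpow_mul, mul_one_div, div_self hq0.ne', ENNReal.rpow_one]
            · congr 1
              refine lintegral_congr fun x => ?_
              rw [← ENNReal.rpow_mul, mul_one_div, div_self (by linarith : (1:ℝ)-q ≠ 0),
                ENNReal.rpow_one]
      _ ≤ C ^ q * 1 ^ (1-q) := by
            gcongr <;> first | exact hC | exact hΦ | linarith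
  rw [ENNReal.one_rpow, mul_one] at hstep
  calc (∫⁻ x, g x ^ q ∂μ) ^ (1/q) ≤ (C ^ q) ^ (1/q) := by
        gcongr
    _ = C := by
        rw [← ENNReal.rpow_mul, mul_one_div, div_self hq0.ne', ENNReal.rpow_one]
end
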